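/- arXiv:1909.09997 — 7 statements merged into one kernel-verified Lean document; each statement's English description precedes it below -/
import Mathlib

section
/- Let G be a locally profinite group, K a compact subgroup of G, and K' an open subgroup of K (so K' is a compact subgroup with finite index [K : K']). Then for every open compact subgroup W of G containing K, there exist open compact subgroups V and V' of G such that K ⊆ V ⊆ W, K' ⊆ V' ⊆ V, V' ∩ K = K', and [V : V'] = [K : K']. -/
/-!
Inside the profinite group `W`, relative openness of `K'` in `K` yields an open normal
subgroup `N` of `W` with `N ∩ K ⊆ K'`. Take `V = K N` and `V' = K' N`: they contain `N`, so
they are open and hence compact in `W`; the modular law gives `V' ∩ K = K' (N ∩ K) = K'`;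
and since `V = K V'`, `[V : V'] = [K : V' ∩ K] = [K : K']`.
-/

open Subgroup

namespace Subgroup

variable {Γ : Type*} [Group Γ]

theorem sup_normal_inf_eq_of_inf_le {H K N : Subgroup Γ} [N.Normal] (hHK : H ≤ K)
    (hNK : N ⊓ K ≤ H) : (H ⊔ N) ⊓ K = H := by
  refine le_antisymm ?_ (le_inf le_sup_left hHK)
  rintro x ⟨hxHN, hxK⟩
  obtain ⟨h, hh, n, hn, rfl⟩ := mem_sup_of_normal_right.mp hxHN
  have hnK : n ∈ K := by simpa using K.mul_mem (K.inv_mem (hHK hh)) hxK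
  exact H.mul_mem hh (hNK ⟨hn, hnK⟩)

theorem relIndex_sup_normal_sup_normal (H K N : Subgroup Γ) [N.Normal] :
    (H ⊔ N).relIndex (K ⊔ N) = (H ⊔ N).relIndex K := by
  rw [← QuotientGroup.ker_mk' N, ← relIndex_map_map, ← relIndex_comap, comap_map_eq]

theorem relIndex_sup_normal_of_inf_le {H K N : Subgroup Γ} [N.Normal] (hHK : H ≤ K)
    (hNK : N ⊓ K ≤ H) : (H ⊔ N).relIndex (K ⊔ N) = H.relIndex K := by
  rw [relIndex_sup_normal_sup_normal, ← inf_relIndex_right, sup_normal_inf_eq_of_inf_le hHK hNK]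

variable [TopologicalSpace Γ] {W : Subgroup Γ}

theorem isOpen_map_subtype (hW : IsOpen (W : Set Γ)) {A : Subgroup W}
    (hA : IsOpen (A : Set W)) : IsOpen (A.map W.subtype : Set Γ) := by
  rw [coe_map, coe_subtype]
  exact hW.isOpenEmbedding_subtypeVal.isOpenMap _ hA

variable [IsTopologicalGroup Γ]

theorem isCompact_map_subtype_of_isOpen (hW : IsCompact (W : Set Γ)) {A : Subgroup W}
    (hA : IsOpen (A : Set W)) : IsCompact (A.map W.subtype : Set Γ) := by
  have : CompactSpace W := isCompact_iff_compactSpace.mp hW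
  rw [coe_map, coe_subtype]
  exact (A.isClosed_of_isOpen hA).isCompact.image continuous_subtype_val

theorem exists_openNormalSubgroup_inf_subgroupOf_le [TotallyDisconnectedSpace Γ]
    (hW : IsCompact (W : Set Γ)) {K K' : Subgroup Γ}
    (hK' : IsOpen ((fun x : K => (x : Γ)) ⁻¹' (K' : Set Γ))) :
    ∃ N : OpenNormalSubgroup W, N.toSubgroup ⊓ K.subgroupOf W ≤ K'.subgroupOf W := by
  have : CompactSpace W := isCompact_iff_compactSpace.mp hW
  obtain ⟨O, hO, hOK⟩ := isOpen_induced_iff.mp hK'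
  have hOK' : ∀ x ∈ K, x ∈ O → x ∈ K' := fun x hxK hxO =>
    show (⟨x, hxK⟩ : K) ∈ Subtype.val ⁻¹' (K' : Set Γ) from hOK ▸ hxO
  have h1O : (1 : Γ) ∈ O := by
    simpa using congrArg (fun s : Set K => (1 : K) ∈ s) hOK
  obtain ⟨N, hN⟩ := ProfiniteGrp.exist_openNormalSubgroup_sub_open_nhds_of_one
    (hO.preimage continuous_subtype_val) (show ((1 : W) : Γ) ∈ O from h1O)
  exact ⟨N, fun x ⟨hxN, hxK⟩ => hOK' x hxK (hN hxN)⟩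

end Subgroup

theorem stmt_0_general {G : Type*} [Group G] [TopologicalSpace G] [IsTopologicalGroup G]
    [TotallyDisconnectedSpace G]
    (K K' : Subgroup G) (hle : K' ≤ K)
    (hK'open : IsOpen ((fun x : K => (x : G)) ⁻¹' (K' : Set G)))
    (W : Subgroup G) (hWopen : IsOpen (W : Set G)) (hWcpt : IsCompact (W : Set G))
    (hKW : K ≤ W) :
    ∃ V V' : Subgroup G,
      IsOpen (V : Set G) ∧ IsCompact (V : Set G) ∧
      IsOpen (V' : Set G) ∧ IsCompact (V' : Set G) ∧
      K ≤ V ∧ V ≤ W ∧ K' ≤ V' ∧ V' ≤ V ∧ V' ⊓ K = K' ∧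
      V'.relIndex V = K'.relIndex K := by
  obtain ⟨N, hNK⟩ := exists_openNormalSubgroup_inf_subgroupOf_le hWcpt hK'open
  set L := K.subgroupOf W
  set L' := K'.subgroupOf W
  have hLL' : L' ≤ L := comap_mono hle
  have hL : L.map W.subtype = K := by rw [subgroupOf_map_subtype, inf_of_le_left hKW]
  have hL' : L'.map W.subtype = K' := by
    rw [subgroupOf_map_subtype, inf_of_le_left (hle.trans hKW)]
  have hNopen {A : Subgroup W} (hNA : N.toSubgroup ≤ A) : IsOpen (A : Set W) :=
    isOpen_mono hNA N.isOpen
  rw [← hL, ← hL']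
  refine ⟨(L ⊔ N).map W.subtype, (L' ⊔ N).map W.subtype,
    isOpen_map_subtype hWopen (hNopen le_sup_right),
    isCompact_map_subtype_of_isOpen hWcpt (hNopen le_sup_right),
    isOpen_map_subtype hWopen (hNopen le_sup_right),
    isCompact_map_subtype_of_isOpen hWcpt (hNopen le_sup_right),
    map_mono le_sup_left, map_subtype_le _, map_mono le_sup_left,
    map_mono (sup_le_sup_right hLL' _), ?_, ?_⟩
  · rw [← map_inf _ _ _ W.subtype_injective, sup_normal_inf_eq_of_inf_le hLL' hNK]
  · rw [relIndex_map_map_of_injective _ _ W.subtype_injective,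
      relIndex_map_map_of_injective _ _ W.subtype_injective,
      relIndex_sup_normal_of_inf_le hLL' hNK]

/-- Let `G` be a locally profinite group (a topological group which is
locally compact, Hausdorff and totally disconnected), `K` a compact subgroup of `G`, and
`K'` an open subgroup of `K` (so `K'` has finite index in `K`).  Then for every open compact
subgroup `W` of `G` containing `K`, there exist open compact subgroups `V` and `V'` of `G`
such that `K ⊆ V ⊆ W`, `K' ⊆ V' ⊆ V`, `V' ∩ K = K'` and `[V : V'] = [K : K']`. -/
theorem stmt_0 {G : Type*} [Group G] [TopologicalSpace G] [IsTopologicalGroup G]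
    [LocallyCompactSpace G] [T2Space G] [TotallyDisconnectedSpace G]
    (K K' : Subgroup G) (hKcpt : IsCompact (K : Set G)) (hle : K' ≤ K)
    (hK'open : IsOpen ((fun x : K => (x : G)) ⁻¹' (K' : Set G)))
    (W : Subgroup G) (hWopen : IsOpen (W : Set G)) (hWcpt : IsCompact (W : Set G))
    (hKW : K ≤ W) :
    ∃ V V' : Subgroup G,
      IsOpen (V : Set G) ∧ IsCompact (V : Set G) ∧
      IsOpen (V' : Set G) ∧ IsCompact (V' : Set G) ∧
      K ≤ V ∧ V ≤ W ∧ K' ≤ V' ∧ V' ≤ V ∧ V' ⊓ K = K' ∧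
      V'.relIndex V = K'.relIndex K :=
  stmt_0_general K K' hle hK'open W hWopen hWcpt hKW
end

section
/- Let M be a Cartesian cohomology functor for (G, Σ) with coefficients in A. Let K' ⊆ K be compact subgroups of G with [K : K'] finite, and suppose K is contained in some open compact subgroup of G contained in Σ. Then there is a unique A-linear map pr^⋆ : M_Iw(K) → M_Iw(K') with the following property: for every pair of open compact subgroups V' ⊆ V ⊆ Σ with K ⊆ V, K' ⊆ V', V' ∩ K = K' and [V : V'] = [K : K'], the composite of pr^⋆ with the canonical projection M_Iw(K') → M(V') equals the composite of the canonical projection M_Iw(K) → M(V) with the pullback pr^⋆_{V',V} : M(V) → M(V'). -/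
/-!
For a good pair `V' ≤ V` (objects with `K ≤ V`, `K' ≤ V'`, `V' ∩ K = K'` and
`[V : V'] = [K : K']`) the index condition says exactly `V = K V'`. So if `W' ≤ W` is a second
good pair with `W ≤ V`, `W' ≤ V'`, then `V = V' W` is a single double coset and `W ∩ V' = W'`,
and the Cartesian property reduces to `pr^⋆_{V',V} ∘ pr_{W,V,⋆} = pr_{W',V',⋆} ∘ pr^⋆_{W',W}`.
Good pairs are cofinal: take `(K N, K' N)` for a small open compact subgroup `N` normalised by
`K` with `N ∩ K ⊆ K'`, which exists because `K'` is open in `K`. Hence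
`pr_{V',W,⋆} ∘ pr^⋆_{V',V} ∘ proj_V` does not depend on the good pair with `V' ⊆ W`; these maps
form `pr^⋆`, and any map with the required property agrees with them because an element of
`M_Iw(K')` is determined at `W` by its value at `V' ⊆ W`.
-/

/-- The conjugate subgroup `γ U γ⁻¹`. -/
def conjSub {G : Type*} [Group G] (γ : G) (U : Subgroup G) : Subgroup G :=
  U.map (MulAut.conj γ).toMonoidHom

/-- A *cohomology functor* for a group `G`, with objects the subgroups satisfying the
predicate `P` (in practice: the open compact subgroups contained in an open submonoid `Σ`),
monoid of admissible twists `S` (in practice `Σ`), and coefficients in a commutative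
ring `A`.  It consists of `A`-modules `M U`, contravariant pullback maps
`pull g U V : M V →ₗ M U` (for the morphism `[g] : U → V` of `𝒫(G, Σ)`, i.e. `g ∈ S` and
`g⁻¹ U g ⊆ V`) and covariant pushforward maps `push g U V : M U →ₗ M V` (for the morphism
`[g] : U → V` of `𝒫(G, Σ⁻¹)`, i.e. `g⁻¹ ∈ S` and `g⁻¹ U g ⊆ V`), which are functorial,
depend only on the double coset `U g V`, and satisfy `[g]^⋆ = [g⁻¹]_⋆` when
`g⁻¹ U g = V`. -/
structure CohFunctor (G : Type*) [Group G] (P : Subgroup G → Prop) (S : Set G)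
    (A : Type*) [CommRing A] where
  M : Subgroup G → Type*
  addCommGroup : ∀ U, AddCommGroup (M U)
  module : ∀ U, Module A (M U)
  pull : ∀ (g : G) (U V : Subgroup G), M V →ₗ[A] M U
  push : ∀ (g : G) (U V : Subgroup G), M U →ₗ[A] M V
  pull_id : ∀ U, P U → pull 1 U U = LinearMap.id
  push_id : ∀ U, P U → push 1 U U = LinearMap.id
  pull_comp : ∀ (g h : G) (U V W : Subgroup G), P U → P V → P W →
    g ∈ S → h ∈ S → (∀ x ∈ U, g⁻¹ * x * g ∈ V) → (∀ x ∈ V, h⁻¹ * x * h ∈ W) →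
    (pull g U V).comp (pull h V W) = pull (g * h) U W
  push_comp : ∀ (g h : G) (U V W : Subgroup G), P U → P V → P W →
    g⁻¹ ∈ S → h⁻¹ ∈ S → (∀ x ∈ U, g⁻¹ * x * g ∈ V) → (∀ x ∈ V, h⁻¹ * x * h ∈ W) →
    (push h V W).comp (push g U V) = push (g * h) U W
  pull_congr : ∀ (g u v : G) (U V : Subgroup G), P U → P V → g ∈ S →
    (∀ x ∈ U, g⁻¹ * x * g ∈ V) → u ∈ U → v ∈ V → pull (u * g * v) U V = pull g U V
  push_congr : ∀ (g u v : G) (U V : Subgroup G), P U → P V → g⁻¹ ∈ S →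
    (∀ x ∈ U, g⁻¹ * x * g ∈ V) → u ∈ U → v ∈ V → push (u * g * v) U V = push g U V
  pull_eq_push : ∀ (g : G) (U V : Subgroup G), P U → P V → g ∈ S →
    conjSub g⁻¹ U = V → pull g U V = push g⁻¹ V U

attribute [instance] CohFunctor.addCommGroup CohFunctor.module

namespace CohFunctor

variable {G : Type*} [Group G] {P : Subgroup G → Prop} {S : Set G}
  {A : Type*} [CommRing A]

/-- The Cartesian (Mackey) condition: for objects `U, U' ≤ V` and any finite set `R` of
representatives of the double cosets `U\V/U'`, the composite `pr^⋆_{U,V} ∘ pr_{U',V,⋆}`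
equals the sum over `γ ∈ R` of `pr_{U_γ,U,⋆} ∘ [γ]^⋆` with `U_γ = γU'γ⁻¹ ∩ U`. -/
def IsCartesian (F : CohFunctor G P S A) : Prop :=
  ∀ (U U' V : Subgroup G), P U → P U' → P V → U ≤ V → U' ≤ V →
    ∀ R : Finset G, (↑R : Set G) ⊆ (V : Set G) →
      (∀ v ∈ V, ∃ γ ∈ R, ∃ x ∈ U, ∃ y ∈ U', v = x * γ * y) →
      (∀ γ ∈ R, ∀ γ' ∈ R, (∃ x ∈ U, ∃ y ∈ U', γ' = x * γ * y) → γ = γ') →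
      (F.pull 1 U V).comp (F.push 1 U' V) =
        ∑ γ ∈ R, (F.push 1 (conjSub γ U' ⊓ U) U).comp (F.pull γ (conjSub γ U' ⊓ U) U')

/-- The Iwasawa completion `M_Iw(K) = lim_U M(U)`, the inverse limit over the objects `U`
containing the compact subgroup `K`, with respect to the pushforward maps `pr_⋆`. -/
def Iw (F : CohFunctor G P S A) (K : Subgroup G) :
    Submodule A (∀ U : {U : Subgroup G // P U ∧ K ≤ U}, F.M U.1) where
  carrier := {f | ∀ (U V : {U : Subgroup G // P U ∧ K ≤ U}), U.1 ≤ V.1 →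
      F.push 1 U.1 V.1 (f U) = f V}
  add_mem' := by
    intro f g hf hg U V h
    simp only [Pi.add_apply, map_add, hf U V h, hg U V h]
  zero_mem' := by
    intro U V h
    simp
  smul_mem' := by
    intro c f hf U V h
    simp only [Pi.smul_apply, map_smul, hf U V h]

/-- Projection from the Iwasawa completion at `K` to the value at an object `U ⊇ K`. -/
def IwProj (F : CohFunctor G P S A) (K U : Subgroup G) (hU : P U) (hKU : K ≤ U) :
    F.Iw K →ₗ[A] F.M U :=
  (LinearMap.proj (⟨U, hU, hKU⟩ : {U : Subgroup G // P U ∧ K ≤ U})).comp (F.Iw K).subtype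

/-- The pushforward `pr_⋆ : M_Iw(K₁) → M_Iw(K₂)` on Iwasawa completions, for compact
subgroups `K₁ ≤ K₂` (restriction of compatible families). -/
def IwRes (F : CohFunctor G P S A) (K₁ K₂ : Subgroup G) (h : K₁ ≤ K₂) :
    F.Iw K₁ →ₗ[A] F.Iw K₂ where
  toFun f := ⟨fun U => f.1 ⟨U.1, U.2.1, le_trans h U.2.2⟩, fun U V hUV =>
    f.2 ⟨U.1, U.2.1, le_trans h U.2.2⟩ ⟨V.1, V.2.1, le_trans h V.2.2⟩ hUV⟩
  map_add' f g := rfl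
  map_smul' c f := rfl

end CohFunctor

open scoped Pointwise

theorem conjSub_one {G : Type*} [Group G] (U : Subgroup G) : conjSub 1 U = U := by
  ext x
  simp [conjSub]

namespace Subgroup

variable {G : Type*} [Group G]

theorem relIndex_eq_relIndex_iff_subset_mul {H K L : Subgroup G} (hKL : K ≤ L)
    (hH : H.relIndex K ≠ 0) :
    H.relIndex L = H.relIndex K ↔ (L : Set G) ⊆ K * H := by
  set e := quotientSubgroupOfEmbeddingOfLE H hKL
  have he : Function.Surjective e ↔ (L : Set G) ⊆ K * H := by
    refine ⟨fun h l hl => ?_, fun h => ?_⟩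
    · obtain ⟨k, hk⟩ := QuotientGroup.mk_surjective.exists.mp (h (QuotientGroup.mk ⟨l, hl⟩))
      rw [quotientSubgroupOfEmbeddingOfLE_apply_mk, QuotientGroup.eq, mem_subgroupOf] at hk
      exact ⟨k, k.2, _, hk, by simp⟩
    · rintro ⟨l⟩
      obtain ⟨k, hk, h, hh, hkh⟩ := h l.2
      refine ⟨QuotientGroup.mk ⟨k, hk⟩, ?_⟩
      rw [quotientSubgroupOfEmbeddingOfLE_apply_mk]
      refine QuotientGroup.eq.mpr ?_
      simpa [mem_subgroupOf, ← hkh] using hh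
  rw [← he]
  refine ⟨fun h => ?_, fun h => (Nat.card_eq_of_bijective e ⟨e.injective, h⟩).symm⟩
  have : Finite (L ⧸ H.subgroupOf L) := Nat.finite_of_card_ne_zero (h.trans_ne hH)
  exact ((Nat.bijective_iff_injective_and_card e).mpr ⟨e.injective, h.symm⟩).2

end Subgroup

structure IsGoodPair {G : Type*} [Group G] (P : Subgroup G → Prop) (K K' V V' : Subgroup G) :
    Prop where
  isObj : P V
  isObj' : P V'
  le : K ≤ V
  le' : K' ≤ V'
  le_left : V' ≤ V
  inf_eq : V' ⊓ K = K'
  relIndex_eq : V'.relIndex V = K'.relIndex K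

namespace IsGoodPair

variable {G : Type*} [Group G] {P : Subgroup G → Prop} {K K' V V' W W' : Subgroup G}

theorem subset_mul (h : IsGoodPair P K K' V V') (hfin : K'.relIndex K ≠ 0) :
    (V : Set G) ⊆ K * V' := by
  have hidx := h.relIndex_eq
  rw [← h.inf_eq, Subgroup.inf_relIndex_right] at hfin hidx
  exact (Subgroup.relIndex_eq_relIndex_iff_subset_mul h.le hfin).mp hidx

theorem subset_mul_of_le (h : IsGoodPair P K K' V V') (hfin : K'.relIndex K ≠ 0)
    (hKW : K ≤ W) : (V : Set G) ⊆ V' * W := by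
  intro v hv
  obtain ⟨k, hk, w, hw, hkw⟩ := h.subset_mul hfin (inv_mem hv)
  refine ⟨w⁻¹, inv_mem hw, k⁻¹, hKW (inv_mem hk), ?_⟩
  simp only at hkw ⊢
  rw [← mul_inv_rev, hkw, inv_inv]

theorem inf_eq_of_le (h : IsGoodPair P K K' V V') (h₂ : IsGoodPair P K K' W W')
    (hfin : K'.relIndex K ≠ 0) (hW'V' : W' ≤ V') : W ⊓ V' = W' := by
  refine le_antisymm (fun x hx => ?_) (le_inf h₂.le_left hW'V')
  obtain ⟨hxW, hxV'⟩ := Subgroup.mem_inf.mp hx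
  obtain ⟨k, hk, w, hw, rfl⟩ := h₂.subset_mul hfin hxW
  have hkV' : k ∈ V' := by
    simpa using mul_mem hxV' (inv_mem (hW'V' hw))
  have hkK' : k ∈ K' := h.inf_eq ▸ Subgroup.mem_inf.mpr ⟨hkV', hk⟩
  exact mul_mem (h₂.le' hkK') hw

end IsGoodPair

def HasCofinalGoodPairs {G : Type*} [Group G] (P : Subgroup G → Prop) (K K' : Subgroup G) :
    Prop :=
  ∀ U W : Subgroup G, P U → K ≤ U → P W → K' ≤ W →
    ∃ V V' : Subgroup G, IsGoodPair P K K' V V' ∧ V ≤ U ∧ V' ≤ W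

namespace CohFunctor

variable {G : Type*} [Group G] {P : Subgroup G → Prop} {S : Set G}
  {A : Type*} [CommRing A] (F : CohFunctor G P S A)

theorem push_one_push_one (hS : (1 : G) ∈ S) {U V W : Subgroup G} (hU : P U) (hV : P V)
    (hW : P W) (hUV : U ≤ V) (hVW : V ≤ W) (x : F.M U) :
    F.push 1 V W (F.push 1 U V x) = F.push 1 U W x := by
  have hS' : (1 : G)⁻¹ ∈ S := by rwa [inv_one]
  have := F.push_comp 1 1 U V W hU hV hW hS' hS' (fun y hy => by simpa using hUV hy)
    (fun y hy => by simpa using hVW hy)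
  rw [one_mul] at this
  exact LinearMap.congr_fun this x

theorem push_one_iwProj {K U V : Subgroup G} (hU : P U) (hV : P V) (hKU : K ≤ U) (hUV : U ≤ V)
    (f : F.Iw K) :
    F.push 1 U V (F.IwProj K U hU hKU f) = F.IwProj K V hV (hKU.trans hUV) f :=
  f.2 ⟨U, hU, hKU⟩ ⟨V, hV, hKU.trans hUV⟩ hUV

variable {F}

/-- When `U\V/U'` is the single double coset `U 1 U'`, the Cartesian property has one term. -/
theorem IsCartesian.pull_one_comp_push_one (hF : F.IsCartesian) {U U' V : Subgroup G}
    (hU : P U) (hU' : P U') (hV : P V) (hUV : U ≤ V) (hU'V : U' ≤ V)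
    (hVUU' : (V : Set G) ⊆ U * U') :
    (F.pull 1 U V).comp (F.push 1 U' V) =
      (F.push 1 (U' ⊓ U) U).comp (F.pull 1 (U' ⊓ U) U') := by
  have hcover : ∀ v ∈ V, ∃ γ ∈ ({1} : Finset G), ∃ x ∈ U, ∃ y ∈ U', v = x * γ * y := by
    intro v hv
    obtain ⟨x, hx, y, hy, hxy⟩ := hVUU' hv
    exact ⟨1, Finset.mem_singleton_self 1, x, hx, y, hy, by simpa using hxy.symm⟩
  have hdisj : ∀ γ ∈ ({1} : Finset G), ∀ γ' ∈ ({1} : Finset G),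
      (∃ x ∈ U, ∃ y ∈ U', γ' = x * γ * y) → γ = γ' := by
    simp
  have := hF U U' V hU hU' hV hUV hU'V {1} (by simp [V.one_mem]) hcover hdisj
  rwa [Finset.sum_singleton, conjSub_one] at this

theorem IsCartesian.pull_one_iwProj_eq (hF : F.IsCartesian) {K K' V V' W W' : Subgroup G}
    (hfin : K'.relIndex K ≠ 0) (h : IsGoodPair P K K' V V') (h₂ : IsGoodPair P K K' W W')
    (hWV : W ≤ V) (hW'V' : W' ≤ V') (f : F.Iw K) :
    F.pull 1 V' V (F.IwProj K V h.isObj h.le f) =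
      F.push 1 W' V' (F.pull 1 W' W (F.IwProj K W h₂.isObj h₂.le f)) := by
  have hcart := hF.pull_one_comp_push_one h.isObj' h₂.isObj h.isObj h.le_left hWV
    (h.subset_mul_of_le hfin h₂.le)
  rw [h.inf_eq_of_le h₂ hfin hW'V'] at hcart
  rw [← F.push_one_iwProj h₂.isObj h.isObj h₂.le hWV]
  exact LinearMap.congr_fun hcart _

/-- Comparing both good pairs with a third one below them, inside `V₁ ⊓ V₂` and `V₁' ⊓ V₂'`. -/
theorem IsCartesian.push_pull_iwProj_eq (hF : F.IsCartesian) (hS : (1 : G) ∈ S)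
    (hP : ∀ U V : Subgroup G, P U → P V → P (U ⊓ V)) {K K' : Subgroup G}
    (hfin : K'.relIndex K ≠ 0) (hcof : HasCofinalGoodPairs P K K')
    {W V₁ V₁' V₂ V₂' : Subgroup G} (hW : P W)
    (h₁ : IsGoodPair P K K' V₁ V₁') (h₂ : IsGoodPair P K K' V₂ V₂')
    (h₁W : V₁' ≤ W) (h₂W : V₂' ≤ W) (f : F.Iw K) :
    F.push 1 V₁' W (F.pull 1 V₁' V₁ (F.IwProj K V₁ h₁.isObj h₁.le f)) =
      F.push 1 V₂' W (F.pull 1 V₂' V₂ (F.IwProj K V₂ h₂.isObj h₂.le f)) := by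
  obtain ⟨V₃, V₃', h₃, hV₃, hV₃'⟩ := hcof (V₁ ⊓ V₂) (V₁' ⊓ V₂')
    (hP _ _ h₁.isObj h₂.isObj) (le_inf h₁.le h₂.le)
    (hP _ _ h₁.isObj' h₂.isObj') (le_inf h₁.le' h₂.le')
  rw [hF.pull_one_iwProj_eq hfin h₁ h₃ (hV₃.trans inf_le_left) (hV₃'.trans inf_le_left),
    hF.pull_one_iwProj_eq hfin h₂ h₃ (hV₃.trans inf_le_right) (hV₃'.trans inf_le_right),
    F.push_one_push_one hS h₃.isObj' h₁.isObj' hW (hV₃'.trans inf_le_left) h₁W,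
    F.push_one_push_one hS h₃.isObj' h₂.isObj' hW (hV₃'.trans inf_le_right) h₂W]

/-- `pr^⋆` on Iwasawa completions is defined at `W ⊇ K'` as `pr_⋆ ∘ pr^⋆` through any good pair
`(V, V')` with `V' ≤ W`. -/
theorem IsCartesian.existsUnique_pullIw (hF : F.IsCartesian) (hS : (1 : G) ∈ S)
    (hP : ∀ U V : Subgroup G, P U → P V → P (U ⊓ V)) {K K' : Subgroup G}
    (hfin : K'.relIndex K ≠ 0) (hcof : HasCofinalGoodPairs P K K')
    (hK : ∃ U : Subgroup G, P U ∧ K ≤ U) :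
    ∃! φ : F.Iw K →ₗ[A] F.Iw K',
      ∀ (V V' : Subgroup G) (hV : P V) (hV' : P V') (hKV : K ≤ V) (hK'V' : K' ≤ V'),
        V' ≤ V → V' ⊓ K = K' → V'.relIndex V = K'.relIndex K →
        ∀ f : F.Iw K, (φ f).1 ⟨V', hV', hK'V'⟩ = F.pull 1 V' V (f.1 ⟨V, hV, hKV⟩) := by
  obtain ⟨U₀, hU₀, hKU₀⟩ := hK
  choose V V' hgood _ hV'W using
    fun (W : Subgroup G) (hW : P W) (hK'W : K' ≤ W) => hcof U₀ W hU₀ hKU₀ hW hK'W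
  let Φ : F.Iw K →ₗ[A] ∀ W : {W : Subgroup G // P W ∧ K' ≤ W}, F.M W.1 :=
    LinearMap.pi fun W =>
      F.push 1 (V' W.1 W.2.1 W.2.2) W.1 ∘ₗ F.pull 1 (V' W.1 W.2.1 W.2.2) (V W.1 W.2.1 W.2.2) ∘ₗ
        F.IwProj K _ (hgood W.1 W.2.1 W.2.2).isObj (hgood W.1 W.2.1 W.2.2).le
  have hΦ : ∀ f, Φ f ∈ F.Iw K' := by
    intro f W₁ W₂ hW
    simp only [Φ, LinearMap.pi_apply, LinearMap.comp_apply]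
    rw [F.push_one_push_one hS (hgood _ _ _).isObj' W₁.2.1 W₂.2.1 (hV'W _ _ _) hW]
    exact hF.push_pull_iwProj_eq hS hP hfin hcof W₂.2.1 (hgood _ _ _) (hgood _ _ _)
      ((hV'W _ _ _).trans hW) (hV'W _ _ _) f
  refine ⟨LinearMap.codRestrict _ Φ hΦ, ?_, ?_⟩
  · intro W W' hW hW' hKW hK'W' hW'W hinf hidx f
    have hgoodW : IsGoodPair P K K' W W' := ⟨hW, hW', hKW, hK'W', hW'W, hinf, hidx⟩
    have := hF.push_pull_iwProj_eq hS hP hfin hcof hW' (hgood W' hW' hK'W') hgoodW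
      (hV'W W' hW' hK'W') le_rfl f
    rwa [F.push_id W' hW'] at this
  · intro ψ hψ
    ext f ⟨W, hW, hK'W⟩
    have hgoodW := hgood W hW hK'W
    rw [← (ψ f).2 ⟨_, hgoodW.isObj', hgoodW.le'⟩ ⟨W, hW, hK'W⟩ (hV'W W hW hK'W)]
    exact congrArg _ (hψ _ _ hgoodW.isObj hgoodW.isObj' hgoodW.le hgoodW.le' hgoodW.le_left
      hgoodW.inf_eq hgoodW.relIndex_eq f)

end CohFunctor

section Topology

variable {G : Type*} [Group G] [TopologicalSpace G] [IsTopologicalGroup G]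

theorem Subgroup.exists_isOpen_inter_eq_of_relIndex_ne_zero [T2Space G] {K K' : Subgroup G}
    (hK' : IsCompact (K' : Set G)) (hle : K' ≤ K) (hfin : K'.relIndex K ≠ 0) :
    ∃ O : Set G, IsOpen O ∧ O ∩ K = K' := by
  have : (K'.subgroupOf K).FiniteIndex := ⟨hfin⟩
  have hclosed : IsClosed (K'.subgroupOf K : Set K) :=
    hK'.isClosed.preimage continuous_subtype_val
  obtain ⟨O, hO, hOK⟩ :=
    isOpen_induced_iff.mp (Subgroup.isOpen_of_isClosed_of_finiteIndex _ hclosed)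
  refine ⟨O, hO, Set.ext fun x => ⟨fun ⟨hxO, hxK⟩ => ?_, fun hx => ⟨?_, hle hx⟩⟩⟩
  · have : (⟨x, hxK⟩ : K) ∈ Subtype.val ⁻¹' O := hxO
    rw [hOK] at this
    exact Subgroup.mem_subgroupOf.mp this
  · have : (⟨x, hle hx⟩ : K) ∈ (K'.subgroupOf K : Set K) := Subgroup.mem_subgroupOf.mpr hx
    rw [← hOK] at this
    exact this

/-- `N` is the image of an open normal subgroup of the profinite group `U`. -/
theorem exists_isOpen_isCompact_subgroup_le_normalizer [TotallyDisconnectedSpace G]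
    {U : Subgroup G} (hUo : IsOpen (U : Set G)) (hUc : IsCompact (U : Set G))
    {Ω : Set G} (hΩ : IsOpen Ω) (h1 : (1 : G) ∈ Ω) :
    ∃ N : Subgroup G, IsOpen (N : Set G) ∧ IsCompact (N : Set G) ∧ N ≤ U ∧ (N : Set G) ⊆ Ω ∧
      U ≤ Subgroup.normalizer (N : Set G) := by
  have : CompactSpace U := isCompact_iff_compactSpace.mp hUc
  obtain ⟨H, hH⟩ := ProfiniteGrp.exist_openNormalSubgroup_sub_open_nhds_of_one
    (hΩ.preimage continuous_subtype_val) (show ((1 : U) : G) ∈ Ω from h1)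
  have hcoe : (H.toSubgroup.map U.subtype : Set G) = Subtype.val '' (H : Set U) := rfl
  refine ⟨H.toSubgroup.map U.subtype, ?_, ?_, Subgroup.map_subtype_le _, ?_, ?_⟩
  · rw [hcoe]
    exact hUo.isOpenMap_subtype_val _ H.isOpen'
  · rw [hcoe]
    exact H.toOpenSubgroup.isClosed.isCompact.image continuous_subtype_val
  · rintro _ ⟨x, hx, rfl⟩
    exact hH hx
  · calc U = (⊤ : Subgroup U).map U.subtype := by rw [← MonoidHom.range_eq_map, U.range_subtype]
      _ = (Subgroup.normalizer (H.toSubgroup : Set U)).map U.subtype := by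
        rw [Subgroup.normalizer_eq_top_iff.mpr H.isNormal']
      _ ≤ _ := Subgroup.le_normalizer_map _

/-- The good pair is `(K N, K' N)` for a small open compact subgroup `N` normalised by `K` with
`N ∩ K ⊆ K'`. -/
theorem hasCofinalGoodPairs_of_isCompact [T2Space G] [TotallyDisconnectedSpace G] (Sig : Set G)
    {K K' : Subgroup G} (hK : IsCompact (K : Set G)) (hK' : IsCompact (K' : Set G))
    (hle : K' ≤ K) (hfin : K'.relIndex K ≠ 0) :
    HasCofinalGoodPairs
      (fun U => IsOpen (U : Set G) ∧ IsCompact (U : Set G) ∧ (U : Set G) ⊆ Sig) K K' := by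
  intro U W hU hKU hW hK'W
  obtain ⟨O, hO, hOK⟩ := Subgroup.exists_isOpen_inter_eq_of_relIndex_ne_zero hK' hle hfin
  have h1O : (1 : G) ∈ O := (hOK.symm ▸ K'.one_mem : (1 : G) ∈ O ∩ K).1
  obtain ⟨N, hNo, hNc, hNU, hNΩ, hUN⟩ := exists_isOpen_isCompact_subgroup_le_normalizer hU.1
    hU.2.1 (hO.inter hW.1) ⟨h1O, W.one_mem⟩
  have hV := Subgroup.coe_mul_of_left_le_normalizer_right K N (hKU.trans hUN)
  have hV' := Subgroup.coe_mul_of_left_le_normalizer_right K' N ((hle.trans hKU).trans hUN)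
  have hVU : K ⊔ N ≤ U := sup_le hKU hNU
  have hV'W : K' ⊔ N ≤ W := sup_le hK'W fun n hn => (hNΩ hn).2
  have hinf : (K' ⊔ N) ⊓ K = K' := by
    refine le_antisymm (fun x hx => ?_) (le_inf le_sup_left hle)
    obtain ⟨hxV', hxK⟩ := Subgroup.mem_inf.mp hx
    rw [← SetLike.mem_coe, hV'] at hxV'
    obtain ⟨k, hk, n, hn, rfl⟩ := hxV'
    have hnK : n ∈ K := by simpa using mul_mem (inv_mem (hle hk)) hxK
    have hnK' : n ∈ K' := by
      rw [← SetLike.mem_coe, ← hOK]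
      exact ⟨(hNΩ hn).1, hnK⟩
    exact mul_mem hk hnK'
  have hidx : (K' ⊔ N).relIndex (K ⊔ N) = K'.relIndex K := by
    have hK'idx : K'.relIndex K = (K' ⊔ N).relIndex K := by
      rw [← Subgroup.inf_relIndex_right (K' ⊔ N), hinf]
    rw [hK'idx] at hfin ⊢
    rw [Subgroup.relIndex_eq_relIndex_iff_subset_mul le_sup_left hfin, hV]
    exact Set.mul_subset_mul_left (SetLike.coe_subset_coe.mpr le_sup_right)
  refine ⟨K ⊔ N, K' ⊔ N, ⟨⟨?_, ?_, ?_⟩, ⟨?_, ?_, ?_⟩, le_sup_left, le_sup_left,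
    sup_le_sup_right hle N, hinf, hidx⟩, hVU, hV'W⟩
  · exact hV ▸ hNo.mul_left
  · exact hV ▸ hK.mul hNc
  · exact (SetLike.coe_subset_coe.mpr hVU).trans hU.2.2
  · exact hV' ▸ hNo.mul_left
  · exact hV' ▸ hK'.mul hNc
  · exact (SetLike.coe_subset_coe.mpr hV'W).trans hW.2.2

end Topology

theorem stmt_1_general {G : Type*} [Group G] [TopologicalSpace G] [IsTopologicalGroup G]
    [T2Space G] [TotallyDisconnectedSpace G]
    {A : Type*} [CommRing A]
    (Sig : Submonoid G)
    (F : CohFunctor G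
      (fun U => IsOpen (U : Set G) ∧ IsCompact (U : Set G) ∧ (U : Set G) ⊆ (Sig : Set G))
      (Sig : Set G) A)
    (hF : F.IsCartesian)
    (K K' : Subgroup G) (hKcpt : IsCompact (K : Set G)) (hK'cpt : IsCompact (K' : Set G))
    (hle : K' ≤ K) (hfin : K'.relIndex K ≠ 0)
    (hexists : ∃ U : Subgroup G,
      (IsOpen (U : Set G) ∧ IsCompact (U : Set G) ∧ (U : Set G) ⊆ (Sig : Set G)) ∧ K ≤ U) :
    ∃! φ : F.Iw K →ₗ[A] F.Iw K',
      ∀ (V V' : Subgroup G)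
        (hV : IsOpen (V : Set G) ∧ IsCompact (V : Set G) ∧ (V : Set G) ⊆ (Sig : Set G))
        (hV' : IsOpen (V' : Set G) ∧ IsCompact (V' : Set G) ∧ (V' : Set G) ⊆ (Sig : Set G))
        (hKV : K ≤ V) (hK'V' : K' ≤ V'),
        V' ≤ V → V' ⊓ K = K' → V'.relIndex V = K'.relIndex K →
        ∀ f : F.Iw K,
          (φ f).1 ⟨V', hV', hK'V'⟩ = F.pull 1 V' V (f.1 ⟨V, hV, hKV⟩) := by
  refine hF.existsUnique_pullIw Sig.one_mem (fun U V hU hV => ?_) hfin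
    (hasCofinalGoodPairs_of_isCompact _ hKcpt hK'cpt hle hfin) hexists
  rw [Subgroup.coe_inf]
  exact ⟨hU.1.inter hV.1, hU.2.1.inter_right hV.2.1.isClosed, Set.inter_subset_left.trans hU.2.2⟩

/-- Let `M` be a Cartesian cohomology functor for `(G, Σ)` (here `G` is a
locally profinite group and `Σ` an open submonoid), with coefficients in `A`.  Let
`K' ⊆ K` be compact subgroups of `G` with `[K : K']` finite, `K` contained in some open
compact subgroup contained in `Σ`.  Then there is a unique `A`-linear map
`pr^⋆ : M_Iw(K) → M_Iw(K')` such that for every pair of open compact subgroups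
`V' ⊆ V ⊆ Σ` with `K ⊆ V`, `K' ⊆ V'`, `V' ∩ K = K'` and `[V : V'] = [K : K']`, the
composite of `pr^⋆` with the projection `M_Iw(K') → M(V')` equals the composite of the
projection `M_Iw(K) → M(V)` with the pullback `pr^⋆_{V',V} : M(V) → M(V')`. -/
theorem stmt_1 {G : Type*} [Group G] [TopologicalSpace G] [IsTopologicalGroup G]
    [LocallyCompactSpace G] [T2Space G] [TotallyDisconnectedSpace G]
    {A : Type*} [CommRing A]
    (Sig : Submonoid G) (hSig : IsOpen (Sig : Set G))
    (F : CohFunctor G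
      (fun U => IsOpen (U : Set G) ∧ IsCompact (U : Set G) ∧ (U : Set G) ⊆ (Sig : Set G))
      (Sig : Set G) A)
    (hF : F.IsCartesian)
    (K K' : Subgroup G) (hKcpt : IsCompact (K : Set G)) (hK'cpt : IsCompact (K' : Set G))
    (hle : K' ≤ K) (hfin : K'.relIndex K ≠ 0)
    (hexists : ∃ U : Subgroup G,
      (IsOpen (U : Set G) ∧ IsCompact (U : Set G) ∧ (U : Set G) ⊆ (Sig : Set G)) ∧ K ≤ U) :
    ∃! φ : F.Iw K →ₗ[A] F.Iw K',
      ∀ (V V' : Subgroup G)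
        (hV : IsOpen (V : Set G) ∧ IsCompact (V : Set G) ∧ (V : Set G) ⊆ (Sig : Set G))
        (hV' : IsOpen (V' : Set G) ∧ IsCompact (V' : Set G) ∧ (V' : Set G) ⊆ (Sig : Set G))
        (hKV : K ≤ V) (hK'V' : K' ≤ V'),
        V' ≤ V → V' ⊓ K = K' → V'.relIndex V = K'.relIndex K →
        ∀ f : F.Iw K,
          (φ f).1 ⟨V', hV', hK'V'⟩ = F.pull 1 V' V (f.1 ⟨V, hV, hKV⟩) :=
  stmt_1_general Sig F hF K K' hKcpt hK'cpt hle hfin hexists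
end

section
/- Let r ≥ 1 and g ∈ GL_n(ℤ_p). Then every entry of τ^{-r} g τ^{r} lies in ℤ_p if and only if there exist n̄ ∈ N̄(ℤ_p), l ∈ L(ℤ_p) and ν ∈ N(ℤ_p) with g = n̄ · l · (τ^r ν τ^{-r}); moreover, when such a factorization exists, the triple (n̄, l, ν) is unique (Iwahori decomposition). -/
open Matrix

section Aux
variable {K : Type*} [Field K] {ι : Type*} [Fintype ι] [DecidableEq ι]
  {α : Type*} [LinearOrder α]

/-- diagonal blocks equal to those of the identity -/
def DiagId (b : ι → α) (X : Matrix ι ι K) : Prop :=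
  ∀ i j, b i = b j → X i j = (1 : Matrix ι ι K) i j

lemma diagId_mul {b : ι → α} {X Y : Matrix ι ι K}
    (hX : X.BlockTriangular b) (hXd : DiagId b X)
    (hY : Y.BlockTriangular b) (hYd : DiagId b Y) : DiagId b (X * Y) := by
  intro i j hb
  rw [Matrix.mul_apply, Finset.sum_eq_single i]
  · rw [hXd i i rfl, Matrix.one_apply_eq, one_mul]; exact hYd i j hb
  · intro l _ hl
    rcases lt_trichotomy (b l) (b i) with h | h | h
    · rw [hX h, zero_mul]
    · rw [hXd i l h.symm, Matrix.one_apply_ne (Ne.symm hl), zero_mul]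
    · rw [hY (hb ▸ h), mul_zero]
  · intro h; exact absurd (Finset.mem_univ i) h

lemma diagId_of_mul_eq_one {b : ι → α} {X Y : Matrix ι ι K}
    (hX : X.BlockTriangular b) (hXd : DiagId b X)
    (hY : Y.BlockTriangular b) (h1 : X * Y = 1) : DiagId b Y := by
  intro i j hb
  have := congrFun (congrFun h1 i) j
  rw [Matrix.mul_apply, Finset.sum_eq_single i] at this
  · rw [hXd i i rfl, Matrix.one_apply_eq, one_mul] at this; exact this
  · intro l _ hl
    rcases lt_trichotomy (b l) (b i) with h | h | h
    · rw [hX h, zero_mul]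
    · rw [hXd i l h.symm, Matrix.one_apply_ne (Ne.symm hl), zero_mul]
    · rw [hY (hb ▸ h), mul_zero]
  · intro h; exact absurd (Finset.mem_univ i) h

lemma det_eq_one_of_diagId {b : ι → α} {X : Matrix ι ι K} [DecidableEq α]
    (hX : X.BlockTriangular b) (hXd : DiagId b X) : X.det = 1 := by
  rw [hX.det]
  refine Finset.prod_eq_one fun m _ => ?_
  have : X.toSquareBlock b m = 1 := by
    ext i j
    have hb : b i.1 = b j.1 := by rw [i.2, j.2]
    rw [Matrix.toSquareBlock_def]
    show X i.1 j.1 = (1 : Matrix {a // b a = m} {a // b a = m} K) i j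
    rw [hXd i.1 j.1 hb]
    by_cases h : i = j
    · subst h; rw [Matrix.one_apply_eq, Matrix.one_apply_eq]
    · rw [Matrix.one_apply_ne h, Matrix.one_apply_ne (fun hc => h (Subtype.ext hc))]
  rw [this, Matrix.det_one]

lemma uniq_core {k : ℕ} {β : ι → Fin k} {nb l u nb' l' u' : Matrix ι ι K}
    (hnb1 : nb.BlockTriangular (OrderDual.toDual ∘ β))
    (hnb2 : DiagId (OrderDual.toDual ∘ β) nb)
    (hnb1' : nb'.BlockTriangular (OrderDual.toDual ∘ β))
    (hnb2' : DiagId (OrderDual.toDual ∘ β) nb')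
    (hl1 : l.BlockTriangular β) (hl2 : l.BlockTriangular (OrderDual.toDual ∘ β))
    (hldet : IsUnit l.det)
    (hl1' : l'.BlockTriangular β) (hl2' : l'.BlockTriangular (OrderDual.toDual ∘ β))
    (hldet' : IsUnit l'.det)
    (hu1 : u.BlockTriangular β) (hu2 : DiagId β u)
    (hu1' : u'.BlockTriangular β) (hu2' : DiagId β u')
    (h : nb * l * u = nb' * l' * u') :
    nb = nb' ∧ l = l' ∧ u = u' := by
  have hbd : ∀ i j : ι, (OrderDual.toDual ∘ β) j < (OrderDual.toDual ∘ β) i ↔ β i < β j := by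
    intro i j; rfl
  have hnbdet : IsUnit nb.det := by rw [det_eq_one_of_diagId hnb1 hnb2]; exact isUnit_one
  have hnbdet' : IsUnit nb'.det := by rw [det_eq_one_of_diagId hnb1' hnb2']; exact isUnit_one
  have hudet : IsUnit u.det := by rw [det_eq_one_of_diagId hu1 hu2]; exact isUnit_one
  have hudet' : IsUnit u'.det := by rw [det_eq_one_of_diagId hu1' hu2']; exact isUnit_one
  have hludet : IsUnit (l * u).det := by rw [Matrix.det_mul]; exact hldet.mul hudet
  haveI := Matrix.invertibleOfIsUnitDet _ hnbdet'
  haveI := Matrix.invertibleOfIsUnitDet _ hludet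
  haveI := Matrix.invertibleOfIsUnitDet _ hldet'
  haveI := Matrix.invertibleOfIsUnitDet _ hudet
  have h' : nb * (l * u) = nb' * (l' * u') := by
    rw [← Matrix.mul_assoc, ← Matrix.mul_assoc]; exact h
  have e2 : nb'⁻¹ * nb = (l' * u') * (l * u)⁻¹ := by
    calc nb'⁻¹ * nb = nb'⁻¹ * (nb * (l * u) * (l * u)⁻¹) := by
          rw [Matrix.mul_nonsing_inv_cancel_right _ _ hludet]
      _ = nb'⁻¹ * nb' * ((l' * u') * (l * u)⁻¹) := by
          rw [h']; simp only [Matrix.mul_assoc]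
      _ = (l' * u') * (l * u)⁻¹ := by rw [Matrix.nonsing_inv_mul _ hnbdet', one_mul]
  have hTbd : (nb'⁻¹ * nb).BlockTriangular (OrderDual.toDual ∘ β) :=
    (Matrix.blockTriangular_inv_of_blockTriangular hnb1').mul hnb1
  have hTd : DiagId (OrderDual.toDual ∘ β) (nb'⁻¹ * nb) := by
    refine diagId_mul (Matrix.blockTriangular_inv_of_blockTriangular hnb1') ?_ hnb1 hnb2
    exact diagId_of_mul_eq_one hnb1' hnb2'
      (Matrix.blockTriangular_inv_of_blockTriangular hnb1')
      (Matrix.mul_nonsing_inv _ hnbdet')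
  have hTup : (nb'⁻¹ * nb).BlockTriangular β := by
    rw [e2]
    exact (hl1'.mul hu1').mul (Matrix.blockTriangular_inv_of_blockTriangular (hl1.mul hu1))
  have hT1 : nb'⁻¹ * nb = 1 := by
    ext i j
    rcases lt_trichotomy (β i) (β j) with hlt | heq | hgt
    · rw [hTbd ((hbd i j).mpr hlt), Matrix.one_apply_ne (fun hc => absurd (hc ▸ hlt) (lt_irrefl _))]
    · exact hTd i j (by simpa using heq)
    · rw [hTup hgt, Matrix.one_apply_ne (fun hc => absurd (hc ▸ hgt) (lt_irrefl _))]
  have hnbeq : nb = nb' := by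
    have : nb' * (nb'⁻¹ * nb) = nb' * 1 := by rw [hT1]
    rwa [Matrix.mul_nonsing_inv_cancel_left _ _ hnbdet', mul_one] at this
  have h'' : l * u = l' * u' := by
    have : nb'⁻¹ * (nb * (l * u)) = nb'⁻¹ * (nb' * (l' * u')) := by rw [h']
    rwa [← hnbeq, Matrix.nonsing_inv_mul_cancel_left _ _ hnbdet,
      hnbeq, Matrix.nonsing_inv_mul_cancel_left _ _ hnbdet'] at this
  have e3 : l'⁻¹ * l = u' * u⁻¹ := by
    calc l'⁻¹ * l = l'⁻¹ * (l * u * u⁻¹) := by rw [Matrix.mul_nonsing_inv_cancel_right _ _ hudet]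
      _ = l'⁻¹ * l' * (u' * u⁻¹) := by rw [h'']; simp only [Matrix.mul_assoc]
      _ = u' * u⁻¹ := by rw [Matrix.nonsing_inv_mul _ hldet', one_mul]
  have hWup : (l'⁻¹ * l).BlockTriangular β :=
    (Matrix.blockTriangular_inv_of_blockTriangular hl1').mul hl1
  have hWbd : (l'⁻¹ * l).BlockTriangular (OrderDual.toDual ∘ β) :=
    (Matrix.blockTriangular_inv_of_blockTriangular hl2').mul hl2
  have hWd : DiagId β (l'⁻¹ * l) := by
    rw [e3]
    refine diagId_mul hu1' hu2' (Matrix.blockTriangular_inv_of_blockTriangular hu1) ?_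
    exact diagId_of_mul_eq_one hu1 hu2 (Matrix.blockTriangular_inv_of_blockTriangular hu1)
      (Matrix.mul_nonsing_inv _ hudet)
  have hW1 : l'⁻¹ * l = 1 := by
    ext i j
    rcases lt_trichotomy (β i) (β j) with hlt | heq | hgt
    · rw [hWbd ((hbd i j).mpr hlt), Matrix.one_apply_ne (fun hc => absurd (hc ▸ hlt) (lt_irrefl _))]
    · exact hWd i j heq
    · rw [hWup hgt, Matrix.one_apply_ne (fun hc => absurd (hc ▸ hgt) (lt_irrefl _))]
  have hleq : l = l' := by
    have : l' * (l'⁻¹ * l) = l' * 1 := by rw [hW1]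
    rwa [Matrix.mul_nonsing_inv_cancel_left _ _ hldet', mul_one] at this
  refine ⟨hnbeq, hleq, ?_⟩
  have : l'⁻¹ * (l * u) = l'⁻¹ * (l' * u') := by rw [h'']
  rwa [← hleq, Matrix.nonsing_inv_mul_cancel_left _ _ hldet,
    hleq, Matrix.nonsing_inv_mul_cancel_left _ _ hldet'] at this


end Aux


lemma exists_decomp (p : ℕ) [Fact p.Prime] (r : ℕ) (hr : 1 ≤ r) :
    ∀ (k : ℕ) (ι : Type) [Fintype ι] [DecidableEq ι] (β : ι → Fin k)
      (a : Fin k → ℤ), StrictAnti a →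
      ∀ G : Matrix ι ι ℤ_[p], IsUnit G →
      (∀ i j, β i < β j → (p : ℤ_[p]) ^ ((r : ℤ) * (a (β i) - a (β j))).toNat ∣ G i j) →
      ∃ nb l u : Matrix ι ι ℤ_[p],
        ((∀ i, nb i i = 1) ∧ ∀ i j, i ≠ j → ¬ β j < β i → nb i j = 0) ∧
        (IsUnit l ∧ ∀ i j, β i ≠ β j → l i j = 0) ∧
        ((∀ i, u i i = 1) ∧ (∀ i j, i ≠ j → ¬ β i < β j → u i j = 0) ∧
          (∀ i j, β i < β j → (p : ℤ_[p]) ^ ((r : ℤ) * (a (β i) - a (β j))).toNat ∣ u i j)) ∧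
        G = nb * l * u := by
  intro k
  induction k with
  | zero =>
    intro ι _ _ β a _ G _ _
    haveI : IsEmpty ι := ⟨fun i => (β i).elim0⟩
    refine ⟨1, 1, 1, ⟨fun i => isEmptyElim i, fun i => isEmptyElim i⟩,
      ⟨isUnit_one, fun i => isEmptyElim i⟩,
      ⟨fun i => isEmptyElim i, fun i => isEmptyElim i, fun i => isEmptyElim i⟩, ?_⟩
    ext i j; exact isEmptyElim i
  | succ k ih =>
    intro ι _ _ β a ha G hG hupper
    classical
    -- exponent notation
    set c : Fin (k+1) → Fin (k+1) → ℕ := fun x y => ((r : ℤ) * (a x - a y)).toNat with hc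
    have hcmono : ∀ {x x' y : Fin (k+1)}, x' ≤ x → c x y ≤ c x' y := by
      intro x x' y hx
      have : (r : ℤ) * (a x - a y) ≤ (r : ℤ) * (a x' - a y) :=
        mul_le_mul_of_nonneg_left (sub_le_sub_right (ha.antitone hx) _) (by positivity)
      simp only [hc]; omega
    have hc1 : ∀ {x y : Fin (k+1)}, x < y → 1 ≤ c x y := by
      intro x y hxy
      have h1 : a y < a x := ha hxy
      have : (1 : ℤ) * 1 ≤ (r : ℤ) * (a x - a y) := by
        apply mul_le_mul (by exact_mod_cast hr) (by omega) one_pos.le (by positivity)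
      simp only [hc]; omega
    -- first block
    let P : ι → Prop := fun i => (OrderDual.toDual ∘ β) i = OrderDual.toDual 0
    have hP : ∀ i, P i ↔ β i = 0 := fun i => Iff.rfl
    let σ : {i // P i} ⊕ {i // ¬ P i} ≃ ι := Equiv.sumCompl P
    set A : Matrix {i // P i} {i // P i} ℤ_[p] := Matrix.of fun i j => G i.1 j.1 with hAdef
    set B : Matrix {i // P i} {i // ¬ P i} ℤ_[p] := Matrix.of fun i j => G i.1 j.1 with hBdef
    set C : Matrix {i // ¬ P i} {i // P i} ℤ_[p] := Matrix.of fun i j => G i.1 j.1 with hCdef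
    set D : Matrix {i // ¬ P i} {i // ¬ P i} ℤ_[p] := Matrix.of fun i j => G i.1 j.1 with hDdef
    have hsub : G.submatrix σ σ = Matrix.fromBlocks A B C D := by
      ext i j
      rcases i with i | i <;> rcases j with j | j <;> rfl
    -- reduction mod p
    have hmap0 : ∀ i j : ι, β i < β j → PadicInt.toZMod (G i j) = 0 := by
      intro i j hij
      obtain ⟨y, hy⟩ := hupper i j hij
      have h1 := hc1 hij
      have hp0 : (PadicInt.toZMod ((p : ℕ) : ℤ_[p]) : ZMod p) = 0 := by
        rw [map_natCast, ZMod.natCast_self]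
      rw [hy, _root_.map_mul, _root_.map_pow, hp0, zero_pow (by have := hc1 hij; simp only [hc] at this; omega), zero_mul]
    have hBT : (G.map PadicInt.toZMod).BlockTriangular (OrderDual.toDual ∘ β) := by
      intro i j hij
      exact hmap0 i j (by exact hij)
    have hdetGb : (G.map PadicInt.toZMod).det ≠ 0 := by
      have h1 : IsUnit G.det := (Matrix.isUnit_iff_isUnit_det G).mp hG
      have h2 := h1.map PadicInt.toZMod
      rw [RingHom.map_det, RingHom.mapMatrix_apply] at h2
      exact h2.ne_zero
    have hsq : (G.map PadicInt.toZMod).toSquareBlock (OrderDual.toDual ∘ β) (OrderDual.toDual 0)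
        = A.map PadicInt.toZMod := by
      ext i j; rfl
    have hdetA : IsUnit A.det := by
      have hfac : (A.map PadicInt.toZMod).det ≠ 0 := by
        by_cases hmem : OrderDual.toDual (0 : Fin (k+1)) ∈
            Finset.univ.image (OrderDual.toDual ∘ β)
        · intro h0
          exact hdetGb (by rw [hBT.det, Finset.prod_eq_zero hmem (by rw [hsq]; exact h0)])
        · haveI : IsEmpty {i // P i} :=
            ⟨fun i => hmem (by rw [← i.2]; exact Finset.mem_image_of_mem _ (Finset.mem_univ i.1))⟩
          rw [Matrix.det_isEmpty]; exact one_ne_zero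
      have h1 : PadicInt.toZMod A.det ≠ 0 := by
        rw [RingHom.map_det, RingHom.mapMatrix_apply]; exact hfac
      rw [PadicInt.isUnit_iff]
      rcases lt_or_eq_of_le (PadicInt.norm_le_one A.det) with hlt | heq
      · exfalso
        obtain ⟨y, hy⟩ := (PadicInt.norm_lt_one_iff_dvd _).mp hlt
        exact h1 (by rw [hy, _root_.map_mul, map_natCast, ZMod.natCast_self, zero_mul])
      · exact heq
    haveI : Invertible A := A.invertibleOfIsUnitDet hdetA
    set S : Matrix {i // ¬ P i} {i // ¬ P i} ℤ_[p] := D - C * ⅟A * B with hSdef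
    have hdetG' : IsUnit (Matrix.fromBlocks A B C D).det := by
      rw [← hsub, Matrix.det_submatrix_equiv_self]
      exact (Matrix.isUnit_iff_isUnit_det G).mp hG
    have hdetS : IsUnit S.det := by
      rw [Matrix.det_fromBlocks₁₁] at hdetG'
      exact isUnit_of_mul_isUnit_right hdetG'
    have hSunit : IsUnit S := (Matrix.isUnit_iff_isUnit_det S).mpr hdetS
    -- restricted data
    have hβ0 : ∀ i : {i // P i}, β i.1 = 0 := fun i => (hP _).mp i.2
    have hβne : ∀ i : {i // ¬ P i}, β i.1 ≠ 0 := fun i h => i.2 ((hP _).mpr h)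
    set β₁ : {i // ¬ P i} → Fin k := fun i => (β i.1).pred (hβne i) with hβ₁def
    set a₁ : Fin k → ℤ := fun m => a m.succ with ha₁def
    have ha₁ : StrictAnti a₁ := fun x y h => ha (Fin.succ_lt_succ_iff.mpr h)
    have hsucc : ∀ i : {i // ¬ P i}, (β₁ i).succ = β i.1 := fun i => Fin.succ_pred _ _
    have hβlt : ∀ i j : {i // ¬ P i}, β₁ i < β₁ j ↔ β i.1 < β j.1 := by
      intro i j
      rw [← Fin.succ_lt_succ_iff, hsucc i, hsucc j]
    have hexp : ∀ i j : {i // ¬ P i},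
        ((r : ℤ) * (a₁ (β₁ i) - a₁ (β₁ j))).toNat = c (β i.1) (β j.1) := by
      intro i j
      simp only [ha₁def, hc]
      rw [hsucc i, hsucc j]
    have hupperS : ∀ i j : {i // ¬ P i}, β₁ i < β₁ j →
        (p : ℤ_[p]) ^ ((r : ℤ) * (a₁ (β₁ i) - a₁ (β₁ j))).toNat ∣ S i j := by
      intro i j hij
      have hb : β i.1 < β j.1 := (hβlt i j).mp hij
      rw [hexp i j]
      have hD : (p : ℤ_[p]) ^ c (β i.1) (β j.1) ∣ D i j := hupper i.1 j.1 hb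
      have hCB : (p : ℤ_[p]) ^ c (β i.1) (β j.1) ∣ (C * ⅟A * B) i j := by
        rw [Matrix.mul_apply]
        refine Finset.dvd_sum fun l _ => Dvd.dvd.mul_left ?_ _
        have hdvd : (p : ℤ_[p]) ^ c (β l.1) (β j.1) ∣ B l j :=
          hupper l.1 j.1 (by rw [hβ0 l]; exact Fin.pos_of_ne_zero (hβne j))
        exact dvd_trans (pow_dvd_pow _ (hcmono (by rw [hβ0 l]; exact Fin.zero_le _))) hdvd
      simpa only [hSdef, Matrix.sub_apply] using dvd_sub hD hCB
    obtain ⟨nb', l', u', ⟨hn1', hn2'⟩, ⟨hl1', hl2'⟩, ⟨hu1', hu2', hu3'⟩, heq'⟩ :=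
      ih {i // ¬ P i} β₁ a₁ ha₁ S hSunit hupperS
    -- assembly
    set Nf := Matrix.fromBlocks (1 : Matrix {i // P i} {i // P i} ℤ_[p]) 0 (C * ⅟A) nb' with hNf
    set Lf := Matrix.fromBlocks A 0 0 l' with hLf
    set Uf := Matrix.fromBlocks (1 : Matrix {i // P i} {i // P i} ℤ_[p]) (⅟A * B) 0 u' with hUf
    have hβσl : ∀ x : {i // P i}, β (σ (Sum.inl x)) = 0 := fun x => hβ0 x
    have hβσr : ∀ x : {i // ¬ P i}, β (σ (Sum.inr x)) = β x.1 := fun x => rfl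
    refine ⟨Nf.submatrix σ.symm σ.symm, Lf.submatrix σ.symm σ.symm, Uf.submatrix σ.symm σ.symm,
      ⟨?_, ?_⟩, ⟨?_, ?_⟩, ⟨?_, ?_, ?_⟩, ?_⟩
    · -- nb diag
      intro i
      obtain ⟨x, rfl⟩ := σ.surjective i
      simp only [Matrix.submatrix_apply, Equiv.symm_apply_apply]
      rcases x with x | x
      · exact Matrix.one_apply_eq x
      · exact hn1' x
    · -- nb zero
      intro i j
      obtain ⟨x, rfl⟩ := σ.surjective i
      obtain ⟨y, rfl⟩ := σ.surjective j
      intro hne hcond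
      simp only [Matrix.submatrix_apply, Equiv.symm_apply_apply]
      rcases x with x | x <;> rcases y with y | y
      · exact Matrix.one_apply_ne (fun h => hne (by rw [h]))
      · rfl
      · exact absurd (by rw [hβσl y, hβσr x]; exact Fin.pos_of_ne_zero (hβne x) : β (σ (Sum.inl y)) < β (σ (Sum.inr x))) hcond
      · refine hn2' x y (fun h => hne (by rw [h])) (fun hlt => hcond ?_)
        rw [hβσr x, hβσr y, ← hsucc x, ← hsucc y]
        exact Fin.succ_lt_succ_iff.mpr hlt
    · -- l unit
      rw [Matrix.isUnit_iff_isUnit_det, Matrix.det_submatrix_equiv_self σ.symm, hLf,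
        Matrix.det_fromBlocks_zero₂₁]
      exact hdetA.mul ((Matrix.isUnit_iff_isUnit_det l').mp hl1')
    · -- l zero
      intro i j
      obtain ⟨x, rfl⟩ := σ.surjective i
      obtain ⟨y, rfl⟩ := σ.surjective j
      intro hcond
      simp only [Matrix.submatrix_apply, Equiv.symm_apply_apply]
      rcases x with x | x <;> rcases y with y | y
      · exact absurd (by rw [hβσl x, hβσl y]) hcond
      · rfl
      · rfl
      · refine hl2' x y (fun h => hcond ?_)
        rw [hβσr x, hβσr y, ← hsucc x, ← hsucc y, h]
    · -- u diag
      intro i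
      obtain ⟨x, rfl⟩ := σ.surjective i
      simp only [Matrix.submatrix_apply, Equiv.symm_apply_apply]
      rcases x with x | x
      · exact Matrix.one_apply_eq x
      · exact hu1' x
    · -- u zero
      intro i j
      obtain ⟨x, rfl⟩ := σ.surjective i
      obtain ⟨y, rfl⟩ := σ.surjective j
      intro hne hcond
      simp only [Matrix.submatrix_apply, Equiv.symm_apply_apply]
      rcases x with x | x <;> rcases y with y | y
      · exact Matrix.one_apply_ne (fun h => hne (by rw [h]))
      · exact absurd (by rw [hβσl x, hβσr y]; exact Fin.pos_of_ne_zero (hβne y) : β (σ (Sum.inl x)) < β (σ (Sum.inr y))) hcond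
      · rfl
      · refine hu2' x y (fun h => hne (by rw [h])) (fun hlt => hcond ?_)
        rw [hβσr x, hβσr y, ← hsucc x, ← hsucc y]
        exact Fin.succ_lt_succ_iff.mpr hlt
    · -- u divisibility
      intro i j
      obtain ⟨x, rfl⟩ := σ.surjective i
      obtain ⟨y, rfl⟩ := σ.surjective j
      intro hlt
      simp only [Matrix.submatrix_apply, Equiv.symm_apply_apply]
      rcases x with x | x <;> rcases y with y | y
      · exact absurd hlt (by rw [hβσl x, hβσl y]; exact lt_irrefl 0)
      · -- (⅟A * B) x y
        show (p : ℤ_[p]) ^ ((r:ℤ) * (a (β (σ (Sum.inl x))) - a (β (σ (Sum.inr y))))).toNat ∣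
          (⅟A * B) x y
        rw [Matrix.mul_apply]
        refine Finset.dvd_sum fun l _ => Dvd.dvd.mul_left ?_ _
        have hdvd : (p : ℤ_[p]) ^ c (β l.1) (β (σ (Sum.inr y))) ∣ B l y :=
          hupper l.1 _ (by rw [hβ0 l, hβσr y]; exact Fin.pos_of_ne_zero (hβne y))
        have : c (β l.1) (β (σ (Sum.inr y))) = ((r:ℤ) * (a (β (σ (Sum.inl x))) - a (β (σ (Sum.inr y))))).toNat := by
          rw [hβ0 l, hβσl x]
        rwa [this] at hdvd
      · exact absurd hlt (by rw [hβσl y]; exact Fin.not_lt_zero _)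
      · have := hu3' x y (by rw [hβlt x y]; exact hlt)
        rwa [hexp x y] at this
    · -- product
      have h1 : C * ⅟A * A = C := by rw [Matrix.mul_assoc, invOf_mul_self, Matrix.mul_one]
      have h2 : A * (⅟A * B) = B := by rw [← Matrix.mul_assoc, mul_invOf_self, Matrix.one_mul]
      have hS22 : C * ⅟A * B + nb' * l' * u' = D := by rw [← heq', hSdef]; abel
      have hprod : Nf * Lf * Uf = Matrix.fromBlocks A B C D := by
        rw [hNf, hLf, hUf, Matrix.fromBlocks_multiply, Matrix.fromBlocks_multiply]
        simp only [Matrix.mul_one, Matrix.one_mul, Matrix.mul_zero, Matrix.zero_mul,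
          add_zero, zero_add, h1, h2, ← Matrix.mul_assoc, hS22]
      rw [Matrix.submatrix_mul_equiv Nf Lf _ σ.symm _,
        Matrix.submatrix_mul_equiv _ Uf _ σ.symm _, hprod, ← hsub,
        Matrix.submatrix_submatrix, Equiv.self_comp_symm, Matrix.submatrix_id_id]


/-- The block upper unipotent condition: `g i i = 1` and `g i j = 0` for `i ≠ j`
unless `β i < β j`. -/
def IsBlockUpperUnipotent {R : Type*} [CommRing R] {n k : ℕ} (β : Fin n → Fin k)
    (g : Matrix (Fin n) (Fin n) R) : Prop :=
  (∀ i, g i i = 1) ∧ ∀ i j, i ≠ j → ¬ β i < β j → g i j = 0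

/-- The block lower unipotent condition. -/
def IsBlockLowerUnipotent {R : Type*} [CommRing R] {n k : ℕ} (β : Fin n → Fin k)
    (g : Matrix (Fin n) (Fin n) R) : Prop :=
  (∀ i, g i i = 1) ∧ ∀ i j, i ≠ j → ¬ β j < β i → g i j = 0

/-- Membership in the block diagonal Levi subgroup `L(ℤ_p)`. -/
def IsBlockLevi {R : Type*} [CommRing R] {n k : ℕ} (β : Fin n → Fin k)
    (g : Matrix (Fin n) (Fin n) R) : Prop :=
  IsUnit g ∧ ∀ i j, β i ≠ β j → g i j = 0

/-- **Iwahori decomposition.** Let `τ` be the diagonal matrix with entries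
`p^(a (β i))`.  For `r ≥ 1` and `g ∈ GL_n(ℤ_p)`, all entries of `τ⁻ʳ g τʳ` are integral
iff `g = n̄ ⬝ l ⬝ (τʳ ν τ⁻ʳ)` with `n̄ ∈ N̄(ℤ_p)`, `l ∈ L(ℤ_p)`, `ν ∈ N(ℤ_p)`; and such a
factorisation, when it exists, is unique. -/
theorem stmt_4 (p : ℕ) [Fact p.Prime] (n k : ℕ) (hn : 1 ≤ n) (hk : 2 ≤ k)
    (β : Fin n → Fin k) (hβ : Monotone β)
    (a : Fin k → ℤ) (ha : StrictAnti a)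
    (r : ℕ) (hr : 1 ≤ r)
    (g : Matrix (Fin n) (Fin n) ℤ_[p]) (hg : IsUnit g) :
    ((∀ i j, ‖(((Matrix.diagonal fun i => (p : ℚ_[p]) ^ (-(a (β i))))) ^ r *
        g.map (fun x => (x : ℚ_[p])) *
        ((Matrix.diagonal fun i => (p : ℚ_[p]) ^ (a (β i)))) ^ r) i j‖ ≤ 1) ↔
      (∃ nbar l ν : Matrix (Fin n) (Fin n) ℤ_[p],
        IsBlockLowerUnipotent β nbar ∧ IsBlockLevi β l ∧ IsBlockUpperUnipotent β ν ∧
        g.map (fun x => (x : ℚ_[p])) =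
          nbar.map (fun x => (x : ℚ_[p])) * l.map (fun x => (x : ℚ_[p])) *
            (((Matrix.diagonal fun i => (p : ℚ_[p]) ^ (a (β i)))) ^ r *
              ν.map (fun x => (x : ℚ_[p])) *
              ((Matrix.diagonal fun i => (p : ℚ_[p]) ^ (-(a (β i))))) ^ r))) ∧
    (∀ nbar l ν nbar' l' ν' : Matrix (Fin n) (Fin n) ℤ_[p],
      IsBlockLowerUnipotent β nbar → IsBlockLevi β l → IsBlockUpperUnipotent β ν →
      IsBlockLowerUnipotent β nbar' → IsBlockLevi β l' → IsBlockUpperUnipotent β ν' →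
      g.map (fun x => (x : ℚ_[p])) =
        nbar.map (fun x => (x : ℚ_[p])) * l.map (fun x => (x : ℚ_[p])) *
          (((Matrix.diagonal fun i => (p : ℚ_[p]) ^ (a (β i)))) ^ r *
            ν.map (fun x => (x : ℚ_[p])) *
            ((Matrix.diagonal fun i => (p : ℚ_[p]) ^ (-(a (β i))))) ^ r) →
      g.map (fun x => (x : ℚ_[p])) =
        nbar'.map (fun x => (x : ℚ_[p])) * l'.map (fun x => (x : ℚ_[p])) *
          (((Matrix.diagonal fun i => (p : ℚ_[p]) ^ (a (β i)))) ^ r *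
            ν'.map (fun x => (x : ℚ_[p])) *
            ((Matrix.diagonal fun i => (p : ℚ_[p]) ^ (-(a (β i))))) ^ r) →
      nbar = nbar' ∧ l = l' ∧ ν = ν') := by
  classical
  have hp : p.Prime := Fact.out
  set Cf : ℤ_[p] → ℚ_[p] := fun x => (x : ℚ_[p]) with hCf
  set Dr : Matrix (Fin n) (Fin n) ℚ_[p] :=
    (Matrix.diagonal fun i => (p : ℚ_[p]) ^ (a (β i))) ^ r with hDr
  set Dr' : Matrix (Fin n) (Fin n) ℚ_[p] :=
    (Matrix.diagonal fun i => (p : ℚ_[p]) ^ (-(a (β i)))) ^ r with hDr'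
  have hpQ : (p : ℚ_[p]) ≠ 0 := Nat.cast_ne_zero.mpr hp.ne_zero
  have hpR0 : (0 : ℝ) < (p : ℝ) := by exact_mod_cast hp.pos
  have hpR1 : (1 : ℝ) ≤ (p : ℝ) := by exact_mod_cast hp.one_lt.le
  have hzp : ∀ m : ℤ, ((p : ℚ_[p]) ^ m) ^ r = (p : ℚ_[p]) ^ (m * (r : ℤ)) := fun m => by
    rw [← zpow_natCast ((p : ℚ_[p]) ^ m) r, ← _root_.zpow_mul]
  have hent : ∀ (v w : Fin n → ℚ_[p]) (M : Matrix (Fin n) (Fin n) ℚ_[p]) (i j : Fin n),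
      ((Matrix.diagonal v) ^ r * M * (Matrix.diagonal w) ^ r) i j
        = (v i) ^ r * M i j * (w j) ^ r := by
    intro v w M i j
    rw [Matrix.diagonal_pow, Matrix.diagonal_pow, Matrix.mul_diagonal, Matrix.diagonal_mul,
      Pi.pow_apply, Pi.pow_apply]
  have hent1 : ∀ (M : Matrix (Fin n) (Fin n) ℚ_[p]) (i j : Fin n),
      (Dr' * M * Dr) i j = (p : ℚ_[p]) ^ (-(a (β i)) * (r : ℤ)) * M i j
        * (p : ℚ_[p]) ^ ((a (β j)) * (r : ℤ)) := by
    intro M i j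
    rw [hDr, hDr', hent, hzp, hzp]
  have hent2 : ∀ (M : Matrix (Fin n) (Fin n) ℚ_[p]) (i j : Fin n),
      (Dr * M * Dr') i j = (p : ℚ_[p]) ^ ((a (β i)) * (r : ℤ)) * M i j
        * (p : ℚ_[p]) ^ (-(a (β j)) * (r : ℤ)) := by
    intro M i j
    rw [hDr, hDr', hent, hzp, hzp]
  have hDD : Dr * Dr' = 1 := by
    rw [hDr, hDr', Matrix.diagonal_pow, Matrix.diagonal_pow, Matrix.diagonal_mul_diagonal]
    have hone : (fun i => ((p : ℚ_[p]) ^ (a (β i))) ^ r * ((p : ℚ_[p]) ^ (-(a (β i)))) ^ r)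
        = fun _ : Fin n => (1 : ℚ_[p]) := by
      funext i
      rw [hzp, hzp, ← zpow_add₀ hpQ,
        show (a (β i)) * (r : ℤ) + (-(a (β i))) * (r : ℤ) = 0 by ring, zpow_zero]
    simp only [Pi.pow_apply]
    rw [hone, Matrix.diagonal_one]
  have hDD' : Dr' * Dr = 1 := by
    rw [hDr, hDr', Matrix.diagonal_pow, Matrix.diagonal_pow, Matrix.diagonal_mul_diagonal]
    have hone : (fun i => ((p : ℚ_[p]) ^ (-(a (β i)))) ^ r * ((p : ℚ_[p]) ^ (a (β i))) ^ r)
        = fun _ : Fin n => (1 : ℚ_[p]) := by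
      funext i
      rw [hzp, hzp, ← zpow_add₀ hpQ,
        show (-(a (β i))) * (r : ℤ) + (a (β i)) * (r : ℤ) = 0 by ring, zpow_zero]
    simp only [Pi.pow_apply]
    rw [hone, Matrix.diagonal_one]
  have hmapmul : ∀ X Y : Matrix (Fin n) (Fin n) ℤ_[p],
      (X * Y).map Cf = X.map Cf * Y.map Cf := by
    intro X Y
    have h : Cf = ⇑(PadicInt.Coe.ringHom (p := p)) := rfl
    rw [h, Matrix.map_mul]
  have hinj : ∀ X Y : Matrix (Fin n) (Fin n) ℤ_[p], X.map Cf = Y.map Cf → X = Y := by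
    intro X Y h
    ext i j
    exact Subtype.coe_injective (congrFun (congrFun h i) j)
  have hsand : ∀ (m s : ℤ) (x : ℚ_[p]),
      ‖(p : ℚ_[p]) ^ m * x * (p : ℚ_[p]) ^ s‖ = (p : ℝ) ^ (-m) * ‖x‖ * (p : ℝ) ^ (-s) := by
    intro m s x
    rw [norm_mul, norm_mul, Padic.norm_p_zpow, Padic.norm_p_zpow]
  have hble : ∀ (m s : ℤ) (x : ℚ_[p]), m + s ≤ 0 → ‖x‖ ≤ 1 →
      (p : ℝ) ^ m * ‖x‖ * (p : ℝ) ^ s ≤ 1 := by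
    intro m s x hms hx
    calc (p : ℝ) ^ m * ‖x‖ * (p : ℝ) ^ s ≤ (p : ℝ) ^ m * 1 * (p : ℝ) ^ s := by
          have h1 : (0 : ℝ) < (p : ℝ) ^ m := zpow_pos hpR0 m
          have h2 : (0 : ℝ) < (p : ℝ) ^ s := zpow_pos hpR0 s
          exact mul_le_mul_of_nonneg_right (mul_le_mul_of_nonneg_left hx h1.le) h2.le
      _ = (p : ℝ) ^ (m + s) := by rw [mul_one, ← zpow_add₀ (ne_of_gt hpR0)]
      _ ≤ (p : ℝ) ^ (0 : ℤ) := zpow_le_zpow_right₀ hpR1 hms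
      _ = 1 := zpow_zero _
  have hnorm_mul : ∀ X Y : Matrix (Fin n) (Fin n) ℚ_[p],
      (∀ i j, ‖X i j‖ ≤ 1) → (∀ i j, ‖Y i j‖ ≤ 1) → ∀ i j, ‖(X * Y) i j‖ ≤ 1 := by
    intro X Y hX hY i j
    rw [Matrix.mul_apply]
    refine IsUltrametricDist.norm_sum_le_of_forall_le_of_nonneg zero_le_one fun l _ => ?_
    rw [norm_mul]
    calc ‖X i l‖ * ‖Y l j‖ ≤ 1 * 1 :=
          mul_le_mul (hX i l) (hY l j) (norm_nonneg _) zero_le_one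
      _ = 1 := one_mul 1
  have hCf0 : Cf 0 = 0 := PadicInt.coe_zero
  have hCf1 : Cf 1 = 1 := PadicInt.coe_one
  have hcoe_norm : ∀ z : ℤ_[p], ‖Cf z‖ ≤ 1 := fun z => by
    rw [hCf]; rw [← PadicInt.norm_def]; exact PadicInt.norm_le_one z
  constructor
  · constructor
    · -- forward: integrality implies decomposition
      intro hnorm
      have hrecover : ∀ (m s : ℤ) (t : ℝ), (p : ℝ) ^ m * t * (p : ℝ) ^ s ≤ 1 →
          t ≤ (p : ℝ) ^ (-m) * (p : ℝ) ^ (-s) := by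
        intro m s t h
        have h1 : (0 : ℝ) < (p : ℝ) ^ m := zpow_pos hpR0 m
        have h2 : (0 : ℝ) < (p : ℝ) ^ s := zpow_pos hpR0 s
        have key : ((p : ℝ) ^ (-m) * (p : ℝ) ^ (-s)) * ((p : ℝ) ^ m * t * (p : ℝ) ^ s) = t := by
          rw [_root_.zpow_neg, _root_.zpow_neg]
          field_simp
        calc t = ((p : ℝ) ^ (-m) * (p : ℝ) ^ (-s)) * ((p : ℝ) ^ m * t * (p : ℝ) ^ s) := key.symm
          _ ≤ ((p : ℝ) ^ (-m) * (p : ℝ) ^ (-s)) * 1 := by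
              have h3 : (0 : ℝ) ≤ (p : ℝ) ^ (-m) * (p : ℝ) ^ (-s) := by positivity
              exact mul_le_mul_of_nonneg_left h h3
          _ = (p : ℝ) ^ (-m) * (p : ℝ) ^ (-s) := mul_one _
      have hdvd : ∀ i j, β i < β j →
          (p : ℤ_[p]) ^ (((r : ℤ) * (a (β i) - a (β j))).toNat) ∣ g i j := by
        intro i j hij
        have h0 : (0 : ℤ) ≤ (r : ℤ) * (a (β i) - a (β j)) :=
          mul_nonneg (by positivity) (by have := ha hij; omega)
        have hh := hnorm i j
        rw [hent1, hsand] at hh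
        have hrec := hrecover _ _ _ hh
        refine Ideal.mem_span_singleton.mp ((PadicInt.norm_le_pow_iff_mem_span_pow _ _).mp ?_)
        rw [PadicInt.norm_def, Int.toNat_of_nonneg h0]
        refine le_trans hrec (le_of_eq ?_)
        rw [← zpow_add₀ (ne_of_gt hpR0)]
        congr 1
        ring
      obtain ⟨nb, l, u, hnb, hl, hu, hfac⟩ :=
        exists_decomp p r hr k (Fin n) β a ha g hg hdvd
      have hb : ∀ i j, ‖(p : ℚ_[p]) ^ (-(a (β i)) * (r : ℤ)) * ((u i j : ℚ_[p]))
          * (p : ℚ_[p]) ^ ((a (β j)) * (r : ℤ))‖ ≤ 1 := by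
        intro i j
        rcases lt_trichotomy (β i) (β j) with hlt | heq | hgt
        · have hd := hu.2.2 i j hlt
          have h0 : (0 : ℤ) ≤ (r : ℤ) * (a (β i) - a (β j)) :=
            mul_nonneg (by positivity) (by have := ha hlt; omega)
          have hn : ‖u i j‖ ≤ (p : ℝ) ^ (-((((r : ℤ) * (a (β i) - a (β j))).toNat : ℕ) : ℤ)) :=
            (PadicInt.norm_le_pow_iff_mem_span_pow _ _).mpr (Ideal.mem_span_singleton.mpr hd)
          rw [Int.toNat_of_nonneg h0] at hn
          rw [hsand]
          calc (p : ℝ) ^ (-(-(a (β i)) * (r : ℤ))) * ‖((u i j : ℚ_[p]))‖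
                * (p : ℝ) ^ (-((a (β j)) * (r : ℤ)))
              ≤ (p : ℝ) ^ (-(-(a (β i)) * (r : ℤ)))
                * (p : ℝ) ^ (-((r : ℤ) * (a (β i) - a (β j))))
                * (p : ℝ) ^ (-((a (β j)) * (r : ℤ))) := by
                rw [← PadicInt.norm_def]
                have h1 : (0 : ℝ) < (p : ℝ) ^ (-(-(a (β i)) * (r : ℤ))) := zpow_pos hpR0 _
                have h2 : (0 : ℝ) < (p : ℝ) ^ (-((a (β j)) * (r : ℤ))) := zpow_pos hpR0 _
                exact mul_le_mul_of_nonneg_right (mul_le_mul_of_nonneg_left hn h1.le) h2.le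
            _ = 1 := by
                rw [← zpow_add₀ (ne_of_gt hpR0), ← zpow_add₀ (ne_of_gt hpR0),
                  show -(-(a (β i)) * (r : ℤ)) + -((r : ℤ) * (a (β i) - a (β j)))
                    + -((a (β j)) * (r : ℤ)) = 0 by ring, zpow_zero]
        · rcases eq_or_ne i j with rfl | hne
          · rw [hu.1 i, PadicInt.coe_one, mul_one, ← zpow_add₀ hpQ,
              show -(a (β i)) * (r : ℤ) + (a (β i)) * (r : ℤ) = 0 by ring, zpow_zero, norm_one]
          · rw [hu.2.1 i j hne (by rw [heq]; exact lt_irrefl _), PadicInt.coe_zero, mul_zero,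
              zero_mul, norm_zero]
            exact zero_le_one
        · rw [hu.2.1 i j (fun h => absurd (h ▸ hgt) (lt_irrefl _)) (fun h => absurd hgt (asymm h)),
            PadicInt.coe_zero, mul_zero, zero_mul, norm_zero]
          exact zero_le_one
      set ν : Matrix (Fin n) (Fin n) ℤ_[p] := fun i j => (⟨_, hb i j⟩ : ℤ_[p]) with hν
      have hνmap : ν.map Cf = Dr' * (u.map Cf) * Dr := by
        ext i j
        rw [hent1]
        rfl
      have hνBU : IsBlockUpperUnipotent β ν := by
        constructor
        · intro i
          apply Subtype.coe_injective
          show (p : ℚ_[p]) ^ (-(a (β i)) * (r : ℤ)) * ((u i i : ℚ_[p]))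
            * (p : ℚ_[p]) ^ ((a (β i)) * (r : ℤ)) = ((1 : ℤ_[p]) : ℚ_[p])
          rw [hu.1 i, PadicInt.coe_one, mul_one, ← zpow_add₀ hpQ,
            show -(a (β i)) * (r : ℤ) + (a (β i)) * (r : ℤ) = 0 by ring, zpow_zero]
        · intro i j hne hnlt
          apply Subtype.coe_injective
          show (p : ℚ_[p]) ^ (-(a (β i)) * (r : ℤ)) * ((u i j : ℤ_[p]) : ℚ_[p])
            * (p : ℚ_[p]) ^ ((a (β j)) * (r : ℤ)) = ((0 : ℤ_[p]) : ℚ_[p])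
          rw [hu.2.1 i j hne hnlt, PadicInt.coe_zero, mul_zero, zero_mul]
      refine ⟨nb, l, ν, hnb, hl, hνBU, ?_⟩
      have hgm : g.map Cf = nb.map Cf * l.map Cf * (u.map Cf) := by
        rw [hfac, hmapmul, hmapmul]
      rw [hgm, hνmap]
      congr 1
      symm
      calc Dr * (Dr' * u.map Cf * Dr) * Dr' = (Dr * Dr') * (u.map Cf * (Dr * Dr')) := by
            simp only [Matrix.mul_assoc]
        _ = u.map Cf := by rw [hDD, Matrix.one_mul, Matrix.mul_one]
    · -- backward: decomposition implies integrality
      rintro ⟨nb, l, ν, hnb, hl, hν, heqf⟩ i j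
      have key : Dr' * (g.map Cf) * Dr
          = (Dr' * nb.map Cf * Dr) * ((Dr' * l.map Cf * Dr) * ν.map Cf) := by
        rw [heqf]
        have h1 : (Dr' * nb.map Cf * Dr) * ((Dr' * l.map Cf * Dr) * ν.map Cf)
            = Dr' * (nb.map Cf * (l.map Cf * (Dr * ν.map Cf))) := by
          simp only [Matrix.mul_assoc]
          rw [show Dr * (Dr' * (l.map Cf * (Dr * ν.map Cf))) = l.map Cf * (Dr * ν.map Cf) from by
            rw [← Matrix.mul_assoc, hDD, Matrix.one_mul]]
        rw [h1]
        calc Dr' * (nb.map Cf * l.map Cf * (Dr * ν.map Cf * Dr')) * Dr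
            = Dr' * (nb.map Cf * (l.map Cf * (Dr * (ν.map Cf * (Dr' * Dr))))) := by
              simp only [Matrix.mul_assoc]
          _ = Dr' * (nb.map Cf * (l.map Cf * (Dr * ν.map Cf))) := by
              rw [hDD', Matrix.mul_one]
      have hNbd : ∀ i j, ‖(Dr' * nb.map Cf * Dr) i j‖ ≤ 1 := by
        intro i j
        rw [hent1]
        rcases lt_trichotomy (β i) (β j) with hlt | heq | hgt
        · rw [show (nb.map Cf) i j = Cf (nb i j) from rfl,
            hnb.2 i j (fun h => absurd (h ▸ hlt) (lt_irrefl _)) (fun h => absurd hlt (asymm h))]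
          rw [hCf0, mul_zero, zero_mul, norm_zero]
          exact zero_le_one
        · rw [hsand]
          exact hble _ _ _ (le_of_eq (by rw [heq]; ring)) (hcoe_norm _)
        · rw [hsand]
          refine hble _ _ _ ?_ (hcoe_norm _)
          have h1 : a (β i) ≤ a (β j) := (ha hgt).le
          have h2 : (0 : ℤ) ≤ (r : ℤ) := by positivity
          nlinarith
      have hLbd : ∀ i j, ‖(Dr' * l.map Cf * Dr) i j‖ ≤ 1 := by
        intro i j
        rw [hent1]
        rcases eq_or_ne (β i) (β j) with heq | hne
        · rw [hsand]
          exact hble _ _ _ (le_of_eq (by rw [heq]; ring)) (hcoe_norm _)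
        · rw [show (l.map Cf) i j = Cf (l i j) from rfl, hl.2 i j hne, hCf0,
            mul_zero, zero_mul, norm_zero]
          exact zero_le_one
      have hVbd : ∀ i j, ‖(ν.map Cf) i j‖ ≤ 1 := fun i j => hcoe_norm _
      rw [key]
      exact hnorm_mul _ _ hNbd (hnorm_mul _ _ hLbd hVbd) i j
  · -- uniqueness
    intro nbar l ν nbar' l' ν' h1 h2 h3 h1' h2' h3' e e'
    have mk_nb : ∀ (X : Matrix (Fin n) (Fin n) ℤ_[p]), IsBlockLowerUnipotent β X →
        (X.map Cf).BlockTriangular (OrderDual.toDual ∘ β)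
          ∧ DiagId (OrderDual.toDual ∘ β) (X.map Cf) := by
      intro X hX
      constructor
      · intro i j hij
        have hlt : β i < β j := hij
        rw [show (X.map Cf) i j = Cf (X i j) from rfl,
          hX.2 i j (fun h => absurd (h ▸ hlt) (lt_irrefl _)) (fun h => absurd hlt (asymm h)),
          hCf0]
      · intro i j hbe
        rcases eq_or_ne i j with rfl | hne
        · rw [show (X.map Cf) i i = Cf (X i i) from rfl, hX.1 i, hCf1,
            Matrix.one_apply_eq]
        · have hbe' : β i = β j := hbe
          rw [show (X.map Cf) i j = Cf (X i j) from rfl,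
            hX.2 i j hne (by rw [hbe']; exact lt_irrefl _), hCf0,
            Matrix.one_apply_ne hne]
    have mk_l : ∀ (X : Matrix (Fin n) (Fin n) ℤ_[p]), IsBlockLevi β X →
        (X.map Cf).BlockTriangular β ∧ (X.map Cf).BlockTriangular (OrderDual.toDual ∘ β)
          ∧ IsUnit (X.map Cf).det := by
      intro X hX
      refine ⟨fun i j hij => ?_, fun i j hij => ?_, ?_⟩
      · rw [show (X.map Cf) i j = Cf (X i j) from rfl,
          hX.2 i j (fun h => absurd (h ▸ hij) (lt_irrefl _)), hCf0]
      · have hlt : β i < β j := hij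
        rw [show (X.map Cf) i j = Cf (X i j) from rfl,
          hX.2 i j (ne_of_lt hlt), hCf0]
      · have hd : IsUnit X.det := (Matrix.isUnit_iff_isUnit_det X).mp hX.1
        have h : Cf = ⇑(PadicInt.Coe.ringHom (p := p)) := rfl
        have := hd.map (PadicInt.Coe.ringHom (p := p))
        rw [RingHom.map_det, RingHom.mapMatrix_apply] at this
        rw [h]
        exact this
    have mk_u : ∀ (X : Matrix (Fin n) (Fin n) ℤ_[p]), IsBlockUpperUnipotent β X →
        (Dr * X.map Cf * Dr').BlockTriangular β ∧ DiagId β (Dr * X.map Cf * Dr') := by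
      intro X hX
      constructor
      · intro i j hij
        rw [hent2, show (X.map Cf) i j = Cf (X i j) from rfl,
          hX.2 i j (fun h => absurd (h ▸ hij) (lt_irrefl _)) (fun h => absurd hij (asymm h)),
          hCf0, mul_zero, zero_mul]
      · intro i j hbe
        rcases eq_or_ne i j with rfl | hne
        · rw [hent2, show (X.map Cf) i i = Cf (X i i) from rfl, hX.1 i, hCf1,
            mul_one, ← zpow_add₀ hpQ,
            show (a (β i)) * (r : ℤ) + -(a (β i)) * (r : ℤ) = 0 by ring, zpow_zero,
            Matrix.one_apply_eq]
        · rw [hent2, show (X.map Cf) i j = Cf (X i j) from rfl,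
            hX.2 i j hne (by rw [hbe]; exact lt_irrefl _), hCf0,
            mul_zero, zero_mul, Matrix.one_apply_ne hne]
    obtain ⟨hnb1, hnb2⟩ := mk_nb nbar h1
    obtain ⟨hnb1', hnb2'⟩ := mk_nb nbar' h1'
    obtain ⟨hl1, hl2, hldet⟩ := mk_l l h2
    obtain ⟨hl1', hl2', hldet'⟩ := mk_l l' h2'
    obtain ⟨hu1, hu2⟩ := mk_u ν h3
    obtain ⟨hu1', hu2'⟩ := mk_u ν' h3'
    have heqq : nbar.map Cf * l.map Cf * (Dr * ν.map Cf * Dr')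
        = nbar'.map Cf * l'.map Cf * (Dr * ν'.map Cf * Dr') := by
      rw [← e, ← e']
    obtain ⟨q1, q2, q3⟩ := uniq_core hnb1 hnb2 hnb1' hnb2' hl1 hl2 hldet hl1' hl2' hldet'
      hu1 hu2 hu1' hu2' heqq
    refine ⟨hinj _ _ q1, hinj _ _ q2, hinj _ _ ?_⟩
    have hrec : ∀ V : Matrix (Fin n) (Fin n) ℚ_[p], Dr' * (Dr * V * Dr') * Dr = V := by
      intro V
      calc Dr' * (Dr * V * Dr') * Dr = Dr' * (Dr * (V * (Dr' * Dr))) := by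
            simp only [Matrix.mul_assoc]
        _ = V := by rw [hDD', Matrix.mul_one, ← Matrix.mul_assoc, hDD', Matrix.one_mul]
    have := congrArg (fun M => Dr' * M * Dr) q3
    simpa only [hrec] using this
end

section
/- For r ≥ 1, the inclusion N_r ⊆ U_r induces a bijection from the coset space N_{r+1}\N_r onto the coset space U_r'\U_r; that is, every right coset of U_r' in U_r contains an element of N_r, and two elements x, y ∈ N_r satisfy U_r' x = U_r' y if and only if N_{r+1} x = N_{r+1} y. -/
open Matrix

variable (p : ℕ) [Fact p.Prime] {n k : ℕ}

/-- The diagonal matrix `τ` with entries `p^(a (β i))`, over `ℚ_p`. -/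
noncomputable def tauMat (β : Fin n → Fin k) (a : Fin k → ℤ) : Matrix (Fin n) (Fin n) ℚ_[p] :=
  Matrix.diagonal fun i => (p : ℚ_[p]) ^ (a (β i))

/-- The diagonal matrix `τ⁻¹` with entries `p^(-a (β i))`, over `ℚ_p`. -/
noncomputable def tauMatInv (β : Fin n → Fin k) (a : Fin k → ℤ) : Matrix (Fin n) (Fin n) ℚ_[p] :=
  Matrix.diagonal fun i => (p : ℚ_[p]) ^ (-(a (β i)))

/-- The block upper unipotent group `N(ℤ_p)`. -/
def NSet (β : Fin n → Fin k) : Set (Matrix (Fin n) (Fin n) ℤ_[p]) :=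
  {g | (∀ i, g i i = 1) ∧ ∀ i j, i ≠ j → ¬ β i < β j → g i j = 0}

/-- `N_r = τ^r N(ℤ_p) τ^{-r}`, viewed inside the integral matrices. -/
def NrSet (β : Fin n → Fin k) (a : Fin k → ℤ) (r : ℕ) :
    Set (Matrix (Fin n) (Fin n) ℤ_[p]) :=
  {g | ∃ ν ∈ NSet p β, g.map (fun x => (x : ℚ_[p])) =
    (tauMat p β a) ^ r * ν.map (fun x => (x : ℚ_[p])) * (tauMatInv p β a) ^ r}

/-- The level group `U_r`: elements `g ∈ GL_n(ℤ_p)` with `τ^{-r} g τ^{r}` integral and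
`g ≡ δ mod p^r` on and above the block diagonal. -/
def UrSet (β : Fin n → Fin k) (a : Fin k → ℤ) (r : ℕ) :
    Set (Matrix (Fin n) (Fin n) ℤ_[p]) :=
  {g | IsUnit g ∧
    (∀ i j, ‖((tauMatInv p β a) ^ r * g.map (fun x => (x : ℚ_[p])) * (tauMat p β a) ^ r) i j‖ ≤ 1) ∧
    ∀ i j, β i ≤ β j → (p : ℤ_[p]) ^ r ∣ (g i j - if i = j then 1 else 0)}

/-- The level group `U_r'`: like `U_r`, but with `τ^{-(r+1)} g τ^{r+1}` integral. -/
def UrSet' (β : Fin n → Fin k) (a : Fin k → ℤ) (r : ℕ) :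
    Set (Matrix (Fin n) (Fin n) ℤ_[p]) :=
  {g | IsUnit g ∧
    (∀ i j, ‖((tauMatInv p β a) ^ (r + 1) * g.map (fun x => (x : ℚ_[p])) *
      (tauMat p β a) ^ (r + 1)) i j‖ ≤ 1) ∧
    ∀ i j, β i ≤ β j → (p : ℤ_[p]) ^ r ∣ (g i j - if i = j then 1 else 0)}


namespace Stmt5Aux
variable {p : ℕ} [Fact p.Prime] {n k : ℕ}

/-- The exponent `(s (a_{β i} - a_{β j}))⁺`. -/
def Ee (β : Fin n → Fin k) (a : Fin k → ℤ) (s : ℕ) (i j : Fin n) : ℕ :=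
  ((s : ℤ) * (a (β i) - a (β j))).toNat

variable {β : Fin n → Fin k} {a : Fin k → ℤ}

lemma Ee_triangle (s : ℕ) (i l j : Fin n) :
    Ee β a s i j ≤ Ee β a s i l + Ee β a s l j := by
  unfold Ee
  have h : (s : ℤ) * (a (β i) - a (β j)) =
      (s : ℤ) * (a (β i) - a (β l)) + (s : ℤ) * (a (β l) - a (β j)) := by ring
  rw [h]; omega

lemma Ee_eq_zero (ha : StrictAnti a) (s : ℕ) {i j : Fin n} (h : ¬ β i < β j) :
    Ee β a s i j = 0 := by
  have h1 : a (β i) ≤ a (β j) := ha.antitone (le_of_not_gt h)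
  unfold Ee
  have : (s : ℤ) * (a (β i) - a (β j)) ≤ 0 :=
    mul_nonpos_of_nonneg_of_nonpos (by positivity) (by omega)
  omega

lemma Ee_coe (ha : StrictAnti a) (s : ℕ) {i j : Fin n} (h : β i < β j) :
    (Ee β a s i j : ℤ) = (s : ℤ) * (a (β i) - a (β j)) := by
  have h1 : a (β j) < a (β i) := ha h
  unfold Ee
  have : 0 ≤ (s : ℤ) * (a (β i) - a (β j)) := by
    have : (0:ℤ) ≤ s := Int.natCast_nonneg s
    nlinarith
  omega

lemma le_Ee (ha : StrictAnti a) (s : ℕ) {i j : Fin n} (h : β i < β j) :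
    s ≤ Ee β a s i j := by
  have h1 : a (β j) < a (β i) := ha h
  unfold Ee
  have h2 : (s:ℤ) * 1 ≤ (s:ℤ) * (a (β i) - a (β j)) := by
    have : (0:ℤ) ≤ s := Int.natCast_nonneg s
    nlinarith
  omega

lemma Ee_eq_of_beta_eq (s : ℕ) {i i' : Fin n} (j : Fin n) (h : β i = β i') :
    Ee β a s i j = Ee β a s i' j := by unfold Ee; rw [h]

-- key gain lemma: if β l < β i then Ee s l j ≥ Ee s i j + s  (for any j with β l < β j? need)
lemma Ee_lower_gain (ha : StrictAnti a) (s : ℕ) {l i j : Fin n} (h : β l < β i)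
    (h' : β i < β j) : Ee β a s i j + s ≤ Ee β a s l j := by
  have h1 : a (β i) < a (β l) := ha h
  have h3 : a (β j) < a (β i) := ha h'
  unfold Ee
  have h0 : (0:ℤ) ≤ s := Int.natCast_nonneg s
  have h2 : (s:ℤ) * (a (β i) - a (β j)) + s ≤ (s:ℤ) * (a (β l) - a (β j)) := by nlinarith
  have h4 : (0:ℤ) ≤ (s:ℤ) * (a (β i) - a (β j)) := by nlinarith
  omega

lemma Ee_succ_ge (ha : StrictAnti a) (r : ℕ) {i j : Fin n} (h : β i < β j)
    (T : ℕ) (hT : (a (β i) - a (β j)).toNat ≤ T) :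
    Ee β a (r+1) i j ≤ Ee β a r i j + T := by
  have h1 : a (β j) < a (β i) := ha h
  unfold Ee
  push_cast
  have : ((r:ℤ)+1) * (a (β i) - a (β j)) = (r:ℤ) * (a (β i) - a (β j)) + (a (β i) - a (β j)) := by
    ring
  omega

lemma p_ne_zero : ((p : ℚ_[p])) ≠ 0 := by
  exact_mod_cast (Fact.out : p.Prime).ne_zero

lemma tauMat_pow (s : ℕ) :
    (tauMat p β a) ^ s = Matrix.diagonal fun i => (p : ℚ_[p]) ^ ((s:ℤ) * a (β i)) := by
  rw [tauMat, Matrix.diagonal_pow]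
  refine congrArg Matrix.diagonal (funext fun i => ?_)
  rw [Pi.pow_apply, ← zpow_natCast ((p:ℚ_[p]) ^ (a (β i))) s, ← _root_.zpow_mul, mul_comm]

lemma tauMatInv_pow (s : ℕ) :
    (tauMatInv p β a) ^ s = Matrix.diagonal fun i => (p : ℚ_[p]) ^ (-((s:ℤ) * a (β i))) := by
  rw [tauMatInv, Matrix.diagonal_pow]
  refine congrArg Matrix.diagonal (funext fun i => ?_)
  rw [Pi.pow_apply, ← zpow_natCast ((p:ℚ_[p]) ^ (-a (β i))) s, ← _root_.zpow_mul]
  ring_nf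

/-- entry of τ^s M τ^{-s} -/
lemma conj_entry (s : ℕ) (M : Matrix (Fin n) (Fin n) ℚ_[p]) (i j : Fin n) :
    ((tauMat p β a) ^ s * M * (tauMatInv p β a) ^ s) i j
      = (p : ℚ_[p]) ^ ((s:ℤ) * (a (β i) - a (β j))) * M i j := by
  rw [tauMat_pow, tauMatInv_pow, Matrix.mul_diagonal, Matrix.diagonal_mul]
  rw [mul_comm ((p:ℚ_[p]) ^ ((s:ℤ) * a (β i)) * M i j) ((p:ℚ_[p]) ^ (-((s:ℤ) * a (β j)))),
    ← mul_assoc, ← zpow_add₀ p_ne_zero]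
  ring_nf

/-- entry of τ^{-s} M τ^{s} -/
lemma conj_entry' (s : ℕ) (M : Matrix (Fin n) (Fin n) ℚ_[p]) (i j : Fin n) :
    ((tauMatInv p β a) ^ s * M * (tauMat p β a) ^ s) i j
      = (p : ℚ_[p]) ^ ((s:ℤ) * (a (β j) - a (β i))) * M i j := by
  rw [tauMat_pow, tauMatInv_pow, Matrix.mul_diagonal, Matrix.diagonal_mul]
  rw [mul_comm ((p:ℚ_[p]) ^ (-((s:ℤ) * a (β i))) * M i j) ((p:ℚ_[p]) ^ ((s:ℤ) * a (β j))),
    ← mul_assoc, ← zpow_add₀ p_ne_zero]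
  ring_nf

/-- norm/dvd bridge -/
lemma norm_zpow_mul_le_one_iff (c : ℤ) (x : ℤ_[p]) :
    ‖(p : ℚ_[p]) ^ c * (x : ℚ_[p])‖ ≤ 1 ↔ (p : ℤ_[p]) ^ ((-c).toNat) ∣ x := by
  have hp1 : (1:ℝ) < p := by exact_mod_cast (Fact.out : p.Prime).one_lt
  rw [norm_mul, Padic.norm_p_zpow]
  rcases le_or_gt 0 c with hc | hc
  · have h0 : (-c).toNat = 0 := by omega
    rw [h0, pow_zero]
    simp only [one_dvd, iff_true]
    calc (p:ℝ) ^ (-c) * ‖(x:ℚ_[p])‖ ≤ (p:ℝ) ^ (-c) * 1 := by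
          refine mul_le_mul_of_nonneg_left ?_ (by positivity)
          rw [← PadicInt.norm_def]; exact x.norm_le_one
      _ ≤ 1 := by
          rw [mul_one]
          refine zpow_le_one_of_nonpos₀ (le_of_lt hp1) (by omega)
  · have h0 : ((-c).toNat : ℤ) = -c := by omega
    have hpne : (p:ℝ) ≠ 0 := by positivity
    have hdvd : (p:ℤ_[p]) ^ ((-c).toNat) ∣ x ↔ ‖x‖ ≤ (p:ℝ) ^ (-(((-c).toNat : ℕ)) : ℤ) := by
      rw [PadicInt.norm_le_pow_iff_mem_span_pow, Ideal.mem_span_singleton]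
    rw [hdvd, ← PadicInt.norm_def]
    have h1 : (-(((-c).toNat : ℕ)) : ℤ) = c := by omega
    rw [h1]
    constructor
    · intro h
      have hpow : (0:ℝ) < (p:ℝ) ^ (-c) := by positivity
      have := mul_le_mul_of_nonneg_left h (le_of_lt (by positivity : (0:ℝ) < (p:ℝ) ^ c))
      calc ‖x‖ = (p:ℝ) ^ c * ((p:ℝ) ^ (-c) * ‖x‖) := by
            rw [← mul_assoc, ← zpow_add₀ hpne, add_neg_cancel, zpow_zero, one_mul]
        _ ≤ (p:ℝ) ^ c * 1 := mul_le_mul_of_nonneg_left h (by positivity)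
        _ = (p:ℝ) ^ c := mul_one _
    · intro h
      have : (p:ℝ) ^ (-c) * ‖x‖ ≤ (p:ℝ) ^ (-c) * (p:ℝ) ^ c :=
        mul_le_mul_of_nonneg_left h (by positivity)
      rwa [← zpow_add₀ hpne, neg_add_cancel, zpow_zero] at this
  
/-- divisibility pattern -/
def Dv (β : Fin n → Fin k) (a : Fin k → ℤ) (s : ℕ) (g : Matrix (Fin n) (Fin n) ℤ_[p]) : Prop :=
  ∀ i j, (p:ℤ_[p]) ^ (Ee β a s i j) ∣ g i j
/-- congruence pattern -/
def Cg (β : Fin n → Fin k) (r : ℕ) (g : Matrix (Fin n) (Fin n) ℤ_[p]) : Prop :=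
  ∀ i j, β i ≤ β j → (p:ℤ_[p]) ^ r ∣ (g i j - if i = j then 1 else 0)
/-- unipotent block-upper pattern -/
def Up (β : Fin n → Fin k) (g : Matrix (Fin n) (Fin n) ℤ_[p]) : Prop :=
  (∀ i, g i i = 1) ∧ ∀ i j, i ≠ j → ¬ β i < β j → g i j = 0

lemma mem_NrSet_iff (ha : StrictAnti a) (s : ℕ) (g : Matrix (Fin n) (Fin n) ℤ_[p]) :
    g ∈ NrSet p β a s ↔ Up β g ∧ Dv β a s g := by
  constructor
  · rintro ⟨ν, ⟨hd, ho⟩, heq⟩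
    have hent : ∀ i j, (g i j : ℚ_[p])
        = (p : ℚ_[p]) ^ ((s:ℤ) * (a (β i) - a (β j))) * (ν i j : ℚ_[p]) := by
      intro i j
      have := congrFun (congrFun heq i) j
      rw [Matrix.map_apply] at this
      rw [this, conj_entry, Matrix.map_apply]
    constructor
    · constructor
      · intro i
        have := hent i i
        simp only [sub_self, mul_zero, zpow_zero, one_mul, hd i] at this
        exact_mod_cast Subtype.coe_injective (by simpa using this)
      · intro i j hij hlt
        have := hent i j
        rw [ho i j hij hlt] at this
        simp only [PadicInt.coe_zero, mul_zero] at this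
        exact Subtype.coe_injective (by simpa using this)
    · intro i j
      by_cases hlt : β i < β j
      · refine Dvd.intro (ν i j) (Subtype.coe_injective ?_)
        push_cast
        rw [hent i j, ← Ee_coe ha s hlt, zpow_natCast]
      · rw [Ee_eq_zero ha s hlt, pow_zero]
        exact one_dvd _
  · rintro ⟨⟨hd, ho⟩, hdv⟩
    refine ⟨Matrix.of fun i j => if β i < β j then (hdv i j).choose else g i j, ⟨?_, ?_⟩, ?_⟩
    · intro i; simp [lt_irrefl, hd i]
    · intro i j hij hlt; simp [if_neg hlt, ho i j hij hlt]
    · funext i j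
      rw [Matrix.map_apply, conj_entry, Matrix.map_apply, Matrix.of_apply]
      by_cases hlt : β i < β j
      · rw [if_pos hlt, ← Ee_coe ha s hlt, zpow_natCast]
        have h2 := congrArg (fun z : ℤ_[p] => (z : ℚ_[p])) (hdv i j).choose_spec
        push_cast at h2
        rw [h2]
      · rw [if_neg hlt]
        rcases eq_or_ne i j with rfl | hij
        · simp
        · rw [ho i j hij hlt]
          simp

lemma norm_cond_iff (ha : StrictAnti a) (s : ℕ) (g : Matrix (Fin n) (Fin n) ℤ_[p]) :
    (∀ i j, ‖((tauMatInv p β a) ^ s * g.map (fun x => (x : ℚ_[p])) * (tauMat p β a) ^ s) i j‖ ≤ 1)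
      ↔ Dv β a s g := by
  have key : ∀ i j : Fin n, (-( (s:ℤ) * (a (β j) - a (β i)))).toNat = Ee β a s i j := by
    intro i j
    unfold Ee
    have : (-( (s:ℤ) * (a (β j) - a (β i)))) = (s:ℤ) * (a (β i) - a (β j)) := by ring
    rw [this]
  constructor
  · intro h i j
    have := h i j
    rw [conj_entry', Matrix.map_apply, norm_zpow_mul_le_one_iff, key] at this
    exact this
  · intro h i j
    rw [conj_entry', Matrix.map_apply, norm_zpow_mul_le_one_iff, key]
    exact h i j

lemma mem_UrSet_iff (ha : StrictAnti a) (r : ℕ) (g : Matrix (Fin n) (Fin n) ℤ_[p]) :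
    g ∈ UrSet p β a r ↔ IsUnit g ∧ Dv β a r g ∧ Cg β r g := by
  unfold UrSet
  rw [Set.mem_setOf_eq, norm_cond_iff ha]
  rfl

lemma mem_UrSet'_iff (ha : StrictAnti a) (r : ℕ) (g : Matrix (Fin n) (Fin n) ℤ_[p]) :
    g ∈ UrSet' p β a r ↔ IsUnit g ∧ Dv β a (r+1) g ∧ Cg β r g := by
  unfold UrSet'
  rw [Set.mem_setOf_eq, norm_cond_iff ha]
  rfl


/-- strictly block upper with divisibility `Ee r + c` -/
def SUc (β : Fin n → Fin k) (a : Fin k → ℤ) (r c : ℕ)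
    (g : Matrix (Fin n) (Fin n) ℤ_[p]) : Prop :=
  (∀ i j, ¬ β i < β j → g i j = 0) ∧ ∀ i j, (p:ℤ_[p]) ^ (Ee β a r i j + c) ∣ g i j

lemma Dv_mul {s : ℕ} {f g : Matrix (Fin n) (Fin n) ℤ_[p]}
    (hf : Dv β a s f) (hg : Dv β a s g) : Dv β a s (f * g) := by
  intro i j
  rw [Matrix.mul_apply]
  refine Finset.dvd_sum fun l _ => ?_
  calc (p:ℤ_[p]) ^ Ee β a s i j ∣ (p:ℤ_[p]) ^ (Ee β a s i l + Ee β a s l j) :=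
        pow_dvd_pow _ (Ee_triangle s i l j)
    _ = (p:ℤ_[p]) ^ Ee β a s i l * (p:ℤ_[p]) ^ Ee β a s l j := pow_add _ _ _
    _ ∣ f i l * g l j := mul_dvd_mul (hf i l) (hg l j)

lemma Dv_one (s : ℕ) : Dv β a s (1 : Matrix (Fin n) (Fin n) ℤ_[p]) := by
  intro i j
  rcases eq_or_ne i j with rfl | hij
  · have : Ee β a s i i = 0 := by unfold Ee; simp
    rw [this, pow_zero]; exact one_dvd _
  · rw [Matrix.one_apply_ne hij]; exact dvd_zero _

lemma Cg_mul {r : ℕ} {f g : Matrix (Fin n) (Fin n) ℤ_[p]}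
    (hf : Cg β r f) (hg : Cg β r g) : Cg β r (f * g) := by
  intro i j hij
  have hrw : (f * g) i j - (if i = j then 1 else 0)
      = ∑ l, (f i l * g l j - (1 : Matrix (Fin n) (Fin n) ℤ_[p]) i l
        * (1 : Matrix (Fin n) (Fin n) ℤ_[p]) l j) := by
    rw [Finset.sum_sub_distrib, ← Matrix.mul_apply, ← Matrix.mul_apply, mul_one,
      Matrix.one_apply]
  rw [hrw]
  refine Finset.dvd_sum fun l _ => ?_
  rcases lt_or_ge (β l) (β i) with hl | hl
  · -- β l < β i ≤ β j, so l ≠ j and g l j ≡ 0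
    have hlj : β l ≤ β j := le_of_lt (lt_of_lt_of_le hl hij)
    have hlj' : l ≠ j := fun h => by subst h; exact absurd hij (not_le_of_gt hl)
    have hil : i ≠ l := fun h => by subst h; exact lt_irrefl _ hl
    have h2 := hg l j hlj
    rw [if_neg hlj'] at h2
    rw [Matrix.one_apply_ne hil, zero_mul, sub_zero]
    exact Dvd.dvd.mul_left (by simpa using h2) (f i l)
  · rcases le_or_gt (β l) (β j) with hl2 | hl2
    · have h1 := hf i l hl
      have h2 := hg l j hl2
      have hsplit : f i l * g l j - (1 : Matrix (Fin n) (Fin n) ℤ_[p]) i l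
          * (1 : Matrix (Fin n) (Fin n) ℤ_[p]) l j
          = (f i l - (if i = l then 1 else 0)) * g l j
            + (if i = l then 1 else 0) * (g l j - (if l = j then 1 else 0)) := by
        rw [Matrix.one_apply, Matrix.one_apply]; ring
      rw [hsplit]
      exact dvd_add (Dvd.dvd.mul_right h1 _) (Dvd.dvd.mul_left h2 _)
    · -- β j < β l : i ≠ l, l ≠ j, f i l ≡ 0
      have hil : i ≠ l := fun h => by subst h; exact absurd hij (not_le_of_gt hl2)
      have hlj' : l ≠ j := fun h => by subst h; exact lt_irrefl _ hl2
      have h1 := hf i l (le_of_lt (lt_of_le_of_lt hij hl2))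
      rw [if_neg hil] at h1
      rw [Matrix.one_apply_ne hil, zero_mul, sub_zero]
      exact Dvd.dvd.mul_right (by simpa using h1) (g l j)

lemma Cg_one (r : ℕ) : Cg β r (1 : Matrix (Fin n) (Fin n) ℤ_[p]) := by
  intro i j _
  rw [Matrix.one_apply, sub_self]
  exact dvd_zero _

lemma strict_pow_eq_zero {S : Matrix (Fin n) (Fin n) ℤ_[p]}
    (h : ∀ i j : Fin n, ¬ (i : ℕ) < (j : ℕ) → S i j = 0) : S ^ n = 0 := by
  have key : ∀ m : ℕ, ∀ i j : Fin n, (j : ℕ) < (i : ℕ) + m → (S ^ m) i j = 0 := by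
    intro m
    induction m with
    | zero =>
      intro i j hj
      rw [pow_zero]
      exact Matrix.one_apply_ne fun hebb => by subst hebb; omega
    | succ m ih =>
      intro i j hj
      rw [pow_succ, Matrix.mul_apply]
      refine Finset.sum_eq_zero fun l _ => ?_
      rcases lt_or_ge (l : ℕ) ((i : ℕ) + m) with hli | hli
      · rw [ih i l hli, zero_mul]
      · rw [h l j (by omega), mul_zero]
  funext i j
  have := key n i j (by omega)
  simpa using this

/-- geometric inverse of 1 + S for S strictly upper (entrywise) -/
lemma geom_inv {S : Matrix (Fin n) (Fin n) ℤ_[p]}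
    (h : ∀ i j : Fin n, ¬ (i : ℕ) < (j : ℕ) → S i j = 0) :
    (1 + S) * (∑ m ∈ Finset.range n, (-S) ^ m) = 1
      ∧ (∑ m ∈ Finset.range n, (-S) ^ m) * (1 + S) = 1 := by
  have hz : (-S) ^ n = 0 := by
    have : (-S : Matrix (Fin n) (Fin n) ℤ_[p]) = (-1 : ℤ_[p]) • S := by
      funext i j; simp
    rw [this, smul_pow, strict_pow_eq_zero h, smul_zero]
  constructor
  · have := mul_geom_sum (-S : Matrix (Fin n) (Fin n) ℤ_[p]) n
    rw [hz, zero_sub] at this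
    calc (1 + S) * (∑ m ∈ Finset.range n, (-S) ^ m)
        = -((-S - 1) * ∑ m ∈ Finset.range n, (-S) ^ m) := by noncomm_ring
      _ = 1 := by rw [this, neg_neg]
  · have := geom_sum_mul (-S : Matrix (Fin n) (Fin n) ℤ_[p]) n
    rw [hz, zero_sub] at this
    calc (∑ m ∈ Finset.range n, (-S) ^ m) * (1 + S)
        = -((∑ m ∈ Finset.range n, (-S) ^ m) * (-S - 1)) := by noncomm_ring
      _ = 1 := by rw [this, neg_neg]

lemma SUc_upper_strict (hβ : Monotone β) {c r : ℕ} {S : Matrix (Fin n) (Fin n) ℤ_[p]}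
    (hS : SUc β a r c S) : ∀ i j : Fin n, ¬ (i : ℕ) < (j : ℕ) → S i j = 0 := by
  intro i j hij
  refine hS.1 i j fun hb => hij ?_
  rcases lt_or_ge (i:ℕ) (j:ℕ) with h | h
  · exact h
  · exact absurd (hβ (show j ≤ i from by omega)) (not_le_of_gt hb)

lemma SUc_add {c r : ℕ} {S T : Matrix (Fin n) (Fin n) ℤ_[p]}
    (hS : SUc β a r c S) (hT : SUc β a r c T) : SUc β a r c (S + T) := by
  refine ⟨fun i j h => by rw [Matrix.add_apply, hS.1 i j h, hT.1 i j h, add_zero],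
    fun i j => ?_⟩
  rw [Matrix.add_apply]
  exact dvd_add (hS.2 i j) (hT.2 i j)

lemma SUc_neg {c r : ℕ} {S : Matrix (Fin n) (Fin n) ℤ_[p]}
    (hS : SUc β a r c S) : SUc β a r c (-S) :=
  ⟨fun i j h => by rw [Matrix.neg_apply, hS.1 i j h, neg_zero],
    fun i j => by rw [Matrix.neg_apply]; exact Dvd.dvd.neg_right (hS.2 i j)⟩

lemma SUc_zero (c r : ℕ) : SUc β a r c (0 : Matrix (Fin n) (Fin n) ℤ_[p]) :=
  ⟨fun i j _ => rfl, fun i j => dvd_zero _⟩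

lemma SUc_mul {c c' r : ℕ} {S T : Matrix (Fin n) (Fin n) ℤ_[p]}
    (hS : SUc β a r c S) (hT : SUc β a r c' T) : SUc β a r (c + c') (S * T) := by
  constructor
  · intro i j h
    rw [Matrix.mul_apply]
    refine Finset.sum_eq_zero fun l _ => ?_
    by_cases h1 : β i < β l
    · by_cases h2 : β l < β j
      · exact absurd (h1.trans h2) h
      · rw [hT.1 l j h2, mul_zero]
    · rw [hS.1 i l h1, zero_mul]
  · intro i j
    rw [Matrix.mul_apply]
    refine Finset.dvd_sum fun l _ => ?_
    calc (p:ℤ_[p]) ^ (Ee β a r i j + (c + c'))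
        ∣ (p:ℤ_[p]) ^ ((Ee β a r i l + c) + (Ee β a r l j + c')) := by
          refine pow_dvd_pow _ ?_
          have := Ee_triangle (β := β) (a := a) r i l j
          omega
      _ = (p:ℤ_[p]) ^ (Ee β a r i l + c) * (p:ℤ_[p]) ^ (Ee β a r l j + c') := pow_add _ _ _
      _ ∣ S i l * T l j := mul_dvd_mul (hS.2 i l) (hT.2 l j)

lemma SUc_mono {c c' r : ℕ} (hcc : c' ≤ c) {S : Matrix (Fin n) (Fin n) ℤ_[p]}
    (hS : SUc β a r c S) : SUc β a r c' S :=
  ⟨hS.1, fun i j => dvd_trans (pow_dvd_pow _ (by omega)) (hS.2 i j)⟩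

lemma SUc_pow {c r : ℕ} {S : Matrix (Fin n) (Fin n) ℤ_[p]}
    (hS : SUc β a r c S) : ∀ m : ℕ, 1 ≤ m → SUc β a r c (S ^ m) := by
  intro m hm
  induction m with
  | zero => omega
  | succ m ih =>
    rcases Nat.eq_or_lt_of_le hm with h1 | h1
    · rw [← h1, pow_one]; exact hS
    · have := SUc_mul (ih (by omega)) hS
      rw [← pow_succ] at this
      exact SUc_mono (by omega) this

/-- the geometric-series tail: ∑_{1 ≤ m < n} (-S)^m -/
lemma SUc_tail {c r : ℕ} {S : Matrix (Fin n) (Fin n) ℤ_[p]}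
    (hS : SUc β a r c S) :
    SUc β a r c (∑ m ∈ Finset.Ico 1 n, (-S) ^ m) := by
  classical
  refine Finset.sum_induction _ _ (fun x y hx hy => SUc_add hx hy) (SUc_zero c r) ?_
  intro m hm
  rw [Finset.mem_Ico] at hm
  exact SUc_pow (SUc_neg hS) m hm.1

lemma geom_sum_split (hn : 1 ≤ n) (S : Matrix (Fin n) (Fin n) ℤ_[p]) :
    (∑ m ∈ Finset.range n, (-S) ^ m) = 1 + ∑ m ∈ Finset.Ico 1 n, (-S) ^ m := by
  rw [Finset.range_eq_Ico, Finset.sum_eq_sum_Ico_succ_bot (by omega : 0 < n)]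
  rw [pow_zero]

lemma Up_sub_one {s : ℕ} {g : Matrix (Fin n) (Fin n) ℤ_[p]}
    (h : Up β g) (hd : Dv β a s g) : SUc β a s 0 (g - 1) := by
  constructor
  · intro i j hij
    rcases eq_or_ne i j with rfl | hne
    · rw [Matrix.sub_apply, h.1 i, Matrix.one_apply_eq, sub_self]
    · rw [Matrix.sub_apply, h.2 i j hne hij, Matrix.one_apply_ne hne, sub_zero]
  · intro i j
    rcases eq_or_ne i j with rfl | hne
    · rw [Matrix.sub_apply, h.1 i, Matrix.one_apply_eq, sub_self]; exact dvd_zero _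
    · rw [Matrix.sub_apply, Matrix.one_apply_ne hne, sub_zero, add_zero]
      exact hd i j

lemma one_add_SUc_Up {s c : ℕ} {T : Matrix (Fin n) (Fin n) ℤ_[p]}
    (hT : SUc β a s c T) : Up β (1 + T) ∧ Dv β a s (1 + T) := by
  refine ⟨⟨fun i => ?_, fun i j hne hij => ?_⟩, fun i j => ?_⟩
  · rw [Matrix.add_apply, Matrix.one_apply_eq, hT.1 i i (lt_irrefl _), add_zero]
  · rw [Matrix.add_apply, Matrix.one_apply_ne hne, hT.1 i j hij, add_zero]
  · rw [Matrix.add_apply]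
    exact dvd_add (Dv_one s i j) (dvd_trans (pow_dvd_pow _ (by omega)) (hT.2 i j))

/-- product of two elements of `N_r` (characterized form) -/
lemma NrP_mul {s : ℕ} {f g : Matrix (Fin n) (Fin n) ℤ_[p]}
    (hf : Up β f ∧ Dv β a s f) (hg : Up β g ∧ Dv β a s g) :
    Up β (f * g) ∧ Dv β a s (f * g) := by
  refine ⟨⟨fun i => ?_, fun i j hne hij => ?_⟩, Dv_mul hf.2 hg.2⟩
  · rw [Matrix.mul_apply]
    have hside : ∀ l ∈ Finset.univ, l ≠ i → f i l * g l i = 0 := by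
      intro l _ hl
      by_cases h1 : β i < β l
      · rw [hg.1.2 l i hl (fun h2 => absurd (h1.trans h2) (lt_irrefl _)), mul_zero]
      · rw [hf.1.2 i l (Ne.symm hl) h1, zero_mul]
    rw [Finset.sum_eq_single i hside (fun h => absurd (Finset.mem_univ i) h),
      hf.1.1 i, hg.1.1 i, one_mul]
  · rw [Matrix.mul_apply]
    refine Finset.sum_eq_zero fun l _ => ?_
    by_cases h1 : β i < β l
    · by_cases h2 : β l < β j
      · exact absurd (h1.trans h2) hij
      · rcases eq_or_ne l j with rfl | hlj
        · exact absurd h1 hij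
        · rw [hg.1.2 l j hlj h2, mul_zero]
    · rcases eq_or_ne i l with rfl | hil
      · rw [hg.1.2 i j hne hij, mul_zero]
      · rw [hf.1.2 i l hil h1, zero_mul]

/-- inverse of an element of `N_r` (characterized form) -/
lemma NrP_inv (hβ : Monotone β) {s : ℕ} {g : Matrix (Fin n) (Fin n) ℤ_[p]}
    (hg : Up β g ∧ Dv β a s g) (hn : 1 ≤ n) :
    ∃ g' : Matrix (Fin n) (Fin n) ℤ_[p], (Up β g' ∧ Dv β a s g')
      ∧ g * g' = 1 ∧ g' * g = 1 := by
  set S := g - 1 with hSdef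
  have hS : SUc β a s 0 S := Up_sub_one hg.1 hg.2
  have hstrict := SUc_upper_strict hβ hS
  have hgeom := geom_inv hstrict
  have hgS : g = 1 + S := by rw [hSdef]; abel
  refine ⟨∑ m ∈ Finset.range n, (-S) ^ m, ?_, by rw [hgS]; exact hgeom.1,
    by rw [hgS]; exact hgeom.2⟩
  rw [geom_sum_split hn]
  exact one_add_SUc_Up (SUc_tail hS)

lemma Ee_coe' (ha : StrictAnti a) (s : ℕ) {i j : Fin n} (h : ¬ β i < β j) :
    (Ee β a s j i : ℤ) = (s : ℤ) * (a (β j) - a (β i)) := by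
  have h1 : a (β i) ≤ a (β j) := ha.antitone (le_of_not_gt h)
  unfold Ee
  have h0 : (0:ℤ) ≤ (s:ℤ) := Int.natCast_nonneg s
  have : 0 ≤ (s : ℤ) * (a (β j) - a (β i)) := by nlinarith
  omega

lemma tau_mul_tauInv (s : ℕ) :
    (tauMat p β a) ^ s * (tauMatInv p β a) ^ s = 1 := by
  rw [tauMat_pow, tauMatInv_pow, Matrix.diagonal_mul_diagonal]
  have : ∀ i : Fin n, (p:ℚ_[p]) ^ ((s:ℤ) * a (β i)) * (p:ℚ_[p]) ^ (-((s:ℤ) * a (β i))) = 1 := by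
    intro i
    rw [← zpow_add₀ p_ne_zero]
    simp
  simp only [this]
  exact Matrix.diagonal_one

lemma tauInv_mul_tau (s : ℕ) :
    (tauMatInv p β a) ^ s * (tauMat p β a) ^ s = 1 := by
  rw [tauMat_pow, tauMatInv_pow, Matrix.diagonal_mul_diagonal]
  have : ∀ i : Fin n, (p:ℚ_[p]) ^ (-((s:ℤ) * a (β i))) * (p:ℚ_[p]) ^ ((s:ℤ) * a (β i)) = 1 := by
    intro i
    rw [← zpow_add₀ p_ne_zero]
    simp
  simp only [this]
  exact Matrix.diagonal_one

/-- the coercion ring hom -/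
noncomputable def coeHom : ℤ_[p] →+* ℚ_[p] := (PadicInt.subring p).subtype

lemma coeHom_apply (x : ℤ_[p]) : (coeHom x : ℚ_[p]) = (x : ℚ_[p]) := rfl

lemma map_eq_coeHom (g : Matrix (Fin n) (Fin n) ℤ_[p]) :
    g.map (fun x => (x : ℚ_[p])) = g.map coeHom := rfl

lemma Dv_inv (ha : StrictAnti a) {s : ℕ} {g g' : Matrix (Fin n) (Fin n) ℤ_[p]}
    (hgg' : g * g' = 1) (hg'g : g' * g = 1) (hdv : Dv β a s g) : Dv β a s g' := by
  classical
  set A := (tauMatInv p β a) ^ s with hA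
  set B := (tauMat p β a) ^ s with hB
  -- the conjugated integral matrix G
  set G : Matrix (Fin n) (Fin n) ℤ_[p] := Matrix.of fun i j =>
    if h : β i < β j then (hdv i j).choose else (p:ℤ_[p]) ^ (Ee β a s j i) * g i j with hG
  have hGmap : G.map (fun x => (x : ℚ_[p])) = A * g.map (fun x => (x : ℚ_[p])) * B := by
    funext i j
    rw [hA, hB, conj_entry', Matrix.map_apply, Matrix.map_apply, hG, Matrix.of_apply]
    by_cases h : β i < β j
    · rw [dif_pos h]
      have hc := (hdv i j).choose_spec
      have h2 := congrArg (fun z : ℤ_[p] => (z : ℚ_[p])) hc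
      push_cast at h2
      rw [h2, ← mul_assoc, ← zpow_natCast (p:ℚ_[p]) (Ee β a s i j), ← zpow_add₀ p_ne_zero]
      rw [show (s:ℤ) * (a (β j) - a (β i)) + (Ee β a s i j : ℤ) = 0 by
        rw [Ee_coe ha s h]; ring]
      rw [zpow_zero, one_mul]
    · rw [dif_neg h]
      push_cast
      rw [← zpow_natCast (p:ℚ_[p]) (Ee β a s j i), Ee_coe' ha s h]
  -- G is invertible over ℤ_[p]
  have hdetg : IsUnit g := ⟨⟨g, g', hgg', hg'g⟩, rfl⟩
  have hdetG : G.det = g.det := by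
    have h1 : ((G.det : ℤ_[p]) : ℚ_[p]) = ((g.det : ℤ_[p]) : ℚ_[p]) := by
      have e1 : (G.map (fun x => (x : ℚ_[p]))).det = ((G.det : ℤ_[p]) : ℚ_[p]) := by
        rw [map_eq_coeHom, ← RingHom.mapMatrix_apply, ← RingHom.map_det, coeHom_apply]
      have e2 : (g.map (fun x => (x : ℚ_[p]))).det = ((g.det : ℤ_[p]) : ℚ_[p]) := by
        rw [map_eq_coeHom, ← RingHom.mapMatrix_apply, ← RingHom.map_det, coeHom_apply]
      rw [← e1, ← e2, hGmap]
      rw [Matrix.det_mul, Matrix.det_mul]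
      have : A.det * B.det = 1 := by
        rw [← Matrix.det_mul, hA, hB, tauInv_mul_tau, Matrix.det_one]
      calc A.det * (g.map (fun x => (x : ℚ_[p]))).det * B.det
          = (g.map (fun x => (x : ℚ_[p]))).det * (A.det * B.det) := by ring
        _ = (g.map (fun x => (x : ℚ_[p]))).det := by rw [this, mul_one]
    exact Subtype.coe_injective h1
  have hGunit : IsUnit G := by
    rw [Matrix.isUnit_iff_isUnit_det, hdetG, ← Matrix.isUnit_iff_isUnit_det]
    exact hdetg
  obtain ⟨u, hu⟩ := hGunit
  set G'' : Matrix (Fin n) (Fin n) ℤ_[p] := ↑u⁻¹ with hG''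
  have hGG'' : G * G'' = 1 := by rw [← hu, hG'']; exact_mod_cast u.mul_inv
  have hG''G : G'' * G = 1 := by rw [← hu, hG'']; exact_mod_cast u.inv_mul
  -- G''.map = A * g'.map * B
  have hG''map : G''.map (fun x => (x : ℚ_[p])) = A * g'.map (fun x => (x : ℚ_[p])) * B := by
    have hleft : (A * g'.map (fun x => (x : ℚ_[p])) * B) * (G.map (fun x => (x : ℚ_[p]))) = 1 := by
      rw [hGmap]
      calc (A * g'.map (fun x => (x : ℚ_[p])) * B) * (A * g.map (fun x => (x : ℚ_[p])) * B)
          = A * (g'.map (fun x => (x : ℚ_[p])) * (B * A) * g.map (fun x => (x : ℚ_[p]))) * B := by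
            noncomm_ring
        _ = A * (g'.map (fun x => (x : ℚ_[p])) * g.map (fun x => (x : ℚ_[p]))) * B := by
            rw [hB, hA, tau_mul_tauInv, mul_one]
        _ = A * B := by
            rw [map_eq_coeHom, map_eq_coeHom, ← Matrix.map_mul, hg'g, Matrix.map_one _
              (map_zero coeHom) (map_one coeHom), mul_one]
        _ = 1 := by rw [hA, hB, tauInv_mul_tau]
    have hright : (G.map (fun x => (x : ℚ_[p]))) * (G''.map (fun x => (x : ℚ_[p]))) = 1 := by
      rw [map_eq_coeHom, map_eq_coeHom, ← Matrix.map_mul, hGG'', Matrix.map_one _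
        (map_zero coeHom) (map_one coeHom)]
    exact (left_inv_eq_right_inv hleft hright).symm
  -- conclude divisibility for g'
  intro i j
  by_cases h : β i < β j
  · have hent := congrFun (congrFun hG''map i) j
    rw [Matrix.map_apply, conj_entry', Matrix.map_apply] at hent
    refine Dvd.intro (G'' i j) (Subtype.coe_injective ?_)
    push_cast
    rw [hent, ← mul_assoc, ← zpow_natCast (p:ℚ_[p]) (Ee β a s i j), ← zpow_add₀ p_ne_zero]
    rw [show (Ee β a s i j : ℤ) + (s:ℤ) * (a (β j) - a (β i)) = 0 by
      rw [Ee_coe ha s h]; ring]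
    rw [zpow_zero, one_mul]
  · rw [Ee_eq_zero ha s h, pow_zero]
    exact one_dvd _

/-- powers of a strictly lower triangular matrix vanish -/
lemma lower_pow_eq_zero {L : Matrix (Fin n) (Fin n) ℤ_[p]}
    (h : ∀ i j : Fin n, ¬ (j : ℕ) < (i : ℕ) → L i j = 0) : L ^ n = 0 := by
  have key : ∀ m : ℕ, ∀ i j : Fin n, (i : ℕ) < (j : ℕ) + m → (L ^ m) i j = 0 := by
    intro m
    induction m with
    | zero =>
      intro i j hj
      rw [pow_zero]
      exact Matrix.one_apply_ne fun hebb => by subst hebb; omega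
    | succ m ih =>
      intro i j hj
      rw [pow_succ, Matrix.mul_apply]
      refine Finset.sum_eq_zero fun l _ => ?_
      rcases lt_or_ge (i : ℕ) ((l : ℕ) + m) with hli | hli
      · rw [ih i l hli, zero_mul]
      · rw [h l j (by omega), mul_zero]
  funext i j
  simpa using key n i j (by omega)

/-- geometric inverse of `1 + S` when `S ^ n = 0` -/
lemma geom_inv_of_pow_zero {S : Matrix (Fin n) (Fin n) ℤ_[p]} (hz0 : S ^ n = 0) :
    (1 + S) * (∑ m ∈ Finset.range n, (-S) ^ m) = 1
      ∧ (∑ m ∈ Finset.range n, (-S) ^ m) * (1 + S) = 1 := by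
  have hz : (-S) ^ n = 0 := by
    have : (-S : Matrix (Fin n) (Fin n) ℤ_[p]) = (-1 : ℤ_[p]) • S := by funext i j; simp
    rw [this, smul_pow, hz0, smul_zero]
  constructor
  · have := mul_geom_sum (-S : Matrix (Fin n) (Fin n) ℤ_[p]) n
    rw [hz, zero_sub] at this
    calc (1 + S) * (∑ m ∈ Finset.range n, (-S) ^ m)
        = -((-S - 1) * ∑ m ∈ Finset.range n, (-S) ^ m) := by noncomm_ring
      _ = 1 := by rw [this, neg_neg]
  · have := geom_sum_mul (-S : Matrix (Fin n) (Fin n) ℤ_[p]) n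
    rw [hz, zero_sub] at this
    calc (∑ m ∈ Finset.range n, (-S) ^ m) * (1 + S)
        = -((∑ m ∈ Finset.range n, (-S) ^ m) * (-S - 1)) := by noncomm_ring
      _ = 1 := by rw [this, neg_neg]

/-- strictly block-lower pattern -/
def Lo (β : Fin n → Fin k) (g : Matrix (Fin n) (Fin n) ℤ_[p]) : Prop :=
  ∀ i j, ¬ β j < β i → g i j = 0

lemma Lo_mul {f g : Matrix (Fin n) (Fin n) ℤ_[p]} (hf : Lo β f) (hg : Lo β g) :
    Lo β (f * g) := by
  intro i j hij
  rw [Matrix.mul_apply]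
  refine Finset.sum_eq_zero fun l _ => ?_
  by_cases h1 : β l < β i
  · by_cases h2 : β j < β l
    · exact absurd (h2.trans h1) hij
    · rw [hg l j h2, mul_zero]
  · rw [hf i l h1, zero_mul]

lemma Lo_neg {g : Matrix (Fin n) (Fin n) ℤ_[p]} (hg : Lo β g) : Lo β (-g) :=
  fun i j h => by rw [Matrix.neg_apply, hg i j h, neg_zero]

lemma Lo_pow {g : Matrix (Fin n) (Fin n) ℤ_[p]} (hg : Lo β g) :
    ∀ m : ℕ, 1 ≤ m → Lo β (g ^ m) := by
  intro m hm
  induction m with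
  | zero => omega
  | succ m ih =>
    rcases Nat.eq_or_lt_of_le hm with h1 | h1
    · rw [← h1, pow_one]; exact hg
    · rw [pow_succ]; exact Lo_mul (ih (by omega)) hg

lemma Lo_sum_Ico {g : Matrix (Fin n) (Fin n) ℤ_[p]} (hg : Lo β g) :
    Lo β (∑ m ∈ Finset.Ico 1 n, (-g) ^ m) := by
  intro i j hij
  rw [Matrix.sum_apply]
  refine Finset.sum_eq_zero fun m hm => ?_
  rw [Finset.mem_Ico] at hm
  exact Lo_pow (Lo_neg hg) m hm.1 i j hij

/-- `p^r` divides all entries of `X * M * Y` if it divides all entries of `M`. -/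
lemma dvd_entries_mul_mid {d : ℤ_[p]} {M X Y : Matrix (Fin n) (Fin n) ℤ_[p]}
    (hM : ∀ i j, d ∣ M i j) (i j : Fin n) : d ∣ (X * M * Y) i j := by
  rw [Matrix.mul_apply]
  refine Finset.dvd_sum fun m _ => ?_
  rw [Matrix.mul_apply, Finset.sum_mul]
  refine Finset.dvd_sum fun l _ => ?_
  exact ((hM l m).mul_left (X i l)).mul_right (Y m j)

lemma Cg_inv (hβ : Monotone β) (hn : 1 ≤ n) {r : ℕ} {g g' : Matrix (Fin n) (Fin n) ℤ_[p]}
    (hgg' : g * g' = 1) (hg'g : g' * g = 1) (hcg : Cg β r g) : Cg β r g' := by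
  classical
  set L : Matrix (Fin n) (Fin n) ℤ_[p] :=
    Matrix.of (fun i j => if β j < β i then g i j else 0) with hL
  have hLo : Lo β L := by
    intro i j hij
    rw [hL, Matrix.of_apply, if_neg hij]
  have hLz : L ^ n = 0 := by
    refine lower_pow_eq_zero fun i j hij => hLo i j fun hb => hij ?_
    rcases lt_or_ge (j:ℕ) (i:ℕ) with h | h
    · exact h
    · exact absurd (hβ (show i ≤ j from by omega)) (not_le_of_gt hb)
  obtain ⟨hBB', hB'B⟩ := geom_inv_of_pow_zero hLz
  set B' : Matrix (Fin n) (Fin n) ℤ_[p] := ∑ m ∈ Finset.range n, (-L) ^ m with hB'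
  -- B' = 1 + strictly lower tail
  have hB'split : B' = 1 + ∑ m ∈ Finset.Ico 1 n, (-L) ^ m := by
    rw [hB', Finset.range_eq_Ico, Finset.sum_eq_sum_Ico_succ_bot (by omega : 0 < n), pow_zero]
  -- p^r divides all entries of (1 + L) - g
  have hmid : ∀ i j, (p:ℤ_[p]) ^ r ∣ ((1 + L) - g) i j := by
    intro i j
    rw [Matrix.sub_apply, Matrix.add_apply, hL, Matrix.of_apply]
    by_cases hb : β j < β i
    · rw [if_pos hb, Matrix.one_apply_ne, zero_add, sub_self]
      · exact dvd_zero _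
      · exact fun hebb => by subst hebb; exact lt_irrefl _ hb
    · rw [if_neg hb, add_zero]
      have := hcg i j (le_of_not_gt hb)
      rw [Matrix.one_apply]
      have hrw : (if i = j then (1:ℤ_[p]) else 0) - g i j
          = -(g i j - if i = j then 1 else 0) := by ring
      rw [hrw]
      exact this.neg_right
  -- g' - B' = g' * ((1+L) - g) * B'
  have hkey : g' - B' = g' * ((1 + L) - g) * B' := by
    have expand : g' * ((1 + L) - g) * B' = g' * ((1 + L) * B') - (g' * g) * B' := by
      noncomm_ring
    rw [expand, hBB', hg'g, mul_one, one_mul]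
  intro i j hij
  have h1 : (p:ℤ_[p]) ^ r ∣ (g' - B') i j := by
    rw [hkey]; exact dvd_entries_mul_mid hmid i j
  have h2 : B' i j = if i = j then 1 else 0 := by
    rw [hB'split, Matrix.add_apply, Matrix.one_apply]
    have : (∑ m ∈ Finset.Ico 1 n, (-L) ^ m) i j = 0 :=
      Lo_sum_Ico hLo i j (not_lt_of_ge hij)
    rw [this, add_zero]
  have hrw : g' i j - (if i = j then 1 else 0) = (g' - B') i j := by
    rw [Matrix.sub_apply, h2]
  rw [hrw]
  exact h1

/-- the strictly-upper part of `g` -/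
noncomputable def su (β : Fin n → Fin k) (g : Matrix (Fin n) (Fin n) ℤ_[p]) :
    Matrix (Fin n) (Fin n) ℤ_[p] :=
  Matrix.of fun i j => if β i < β j then g i j else 0

/-- geometric inverse of `1 + su g` -/
noncomputable def nuInv (β : Fin n → Fin k) (g : Matrix (Fin n) (Fin n) ℤ_[p]) :
    Matrix (Fin n) (Fin n) ℤ_[p] :=
  ∑ m ∈ Finset.range n, (-(su β g)) ^ m

lemma su_SUc {r t : ℕ} {g : Matrix (Fin n) (Fin n) ℤ_[p]}
    (hgr : ∀ i j, β i < β j → (p:ℤ_[p]) ^ (Ee β a r i j + t) ∣ g i j) :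
    SUc β a r t (su β g) := by
  constructor
  · intro i j h; exact if_neg h
  · intro i j
    by_cases h : β i < β j
    · rw [su, Matrix.of_apply, if_pos h]; exact hgr i j h
    · rw [su, Matrix.of_apply, if_neg h]; exact dvd_zero _

lemma nu_mul_nuInv (hβ : Monotone β) {r t : ℕ} {g : Matrix (Fin n) (Fin n) ℤ_[p]}
    (hgr : ∀ i j, β i < β j → (p:ℤ_[p]) ^ (Ee β a r i j + t) ∣ g i j) :
    (1 + su β g) * nuInv β g = 1 ∧ nuInv β g * (1 + su β g) = 1 :=
  geom_inv_of_pow_zero (strict_pow_eq_zero (SUc_upper_strict hβ (su_SUc hgr)))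

/-- key invariant step -/
lemma step_main (hβ : Monotone β) (ha : StrictAnti a) (hn : 1 ≤ n) {r t : ℕ} (hr : 1 ≤ r)
    {g : Matrix (Fin n) (Fin n) ℤ_[p]}
    (hu : IsUnit g) (hdv : Dv β a r g) (hcg : Cg β r g)
    (hgr : ∀ i j, β i < β j → (p:ℤ_[p]) ^ (Ee β a r i j + t) ∣ g i j) :
    IsUnit (g * nuInv β g) ∧ Dv β a r (g * nuInv β g) ∧ Cg β r (g * nuInv β g)
      ∧ (∀ i j, β i < β j → (p:ℤ_[p]) ^ (Ee β a r i j + (t+1)) ∣ (g * nuInv β g) i j) := by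
  have hsu : SUc β a r t (su β g) := su_SUc hgr
  obtain ⟨hni1, hni2⟩ := nu_mul_nuInv hβ (a := a) hgr
  have htail : SUc β a r t (∑ m ∈ Finset.Ico 1 n, (-(su β g)) ^ m) := SUc_tail hsu
  have hsplit : nuInv β g = 1 + ∑ m ∈ Finset.Ico 1 n, (-(su β g)) ^ m :=
    geom_sum_split hn _
  have hnuUp : Up β (nuInv β g) ∧ Dv β a r (nuInv β g) := by
    rw [hsplit]; exact one_add_SUc_Up htail
  have hnuCg : Cg β r (nuInv β g) := by
    intro i j hij
    have hval : nuInv β g i j - (if i = j then 1 else 0)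
        = (∑ m ∈ Finset.Ico 1 n, (-(su β g)) ^ m) i j := by
      rw [hsplit, Matrix.add_apply, Matrix.one_apply]; ring
    rw [hval]
    by_cases h : β i < β j
    · exact dvd_trans (pow_dvd_pow _ (by have := le_Ee ha r h; omega)) (htail.2 i j)
    · rw [htail.1 i j h]; exact dvd_zero _
  have hnuUnit : IsUnit (nuInv β g) := ⟨⟨nuInv β g, 1 + su β g, hni2, hni1⟩, rfl⟩
  refine ⟨hu.mul hnuUnit, Dv_mul hdv hnuUp.2, Cg_mul hcg hnuCg, ?_⟩
  -- the grading computation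
  set S := su β g with hSdef
  set Tl := ∑ m ∈ Finset.Ico 1 n, (-S) ^ m with hTl
  have h2 : S * nuInv β g = -Tl := by
    have he : nuInv β g + S * nuInv β g = 1 := by
      calc nuInv β g + S * nuInv β g = (1 + S) * nuInv β g := by noncomm_ring
        _ = 1 := hni1
    have : S * nuInv β g = 1 - nuInv β g := by
      rw [← he]; abel
    rw [this, hsplit]; abel
  have hB : g * nuInv β g = (g - S) + ((g - S) - 1) * Tl := by
    calc g * nuInv β g = (g - S) * nuInv β g + S * nuInv β g := by noncomm_ring
      _ = (g - S) * (1 + Tl) + -Tl := by rw [h2, hsplit]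
      _ = (g - S) + ((g - S) - 1) * Tl := by noncomm_ring
  intro i j hij
  rw [hB, Matrix.add_apply]
  have hB1 : (g - S) i j = 0 := by
    rw [Matrix.sub_apply, hSdef, su, Matrix.of_apply, if_pos hij, sub_self]
  rw [hB1, zero_add, Matrix.mul_apply]
  refine Finset.dvd_sum fun l _ => ?_
  by_cases h1 : β i < β l
  · have hil : i ≠ l := fun h => by subst h; exact lt_irrefl _ h1
    have hz : ((g - S) - 1) i l = 0 := by
      rw [Matrix.sub_apply, Matrix.sub_apply, hSdef, su, Matrix.of_apply, if_pos h1,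
        Matrix.one_apply_ne hil, sub_self, sub_zero]
    rw [hz, zero_mul]; exact dvd_zero _
  · rcases lt_or_ge (β l) (β i) with h2' | h2'
    · refine dvd_trans (pow_dvd_pow _ ?_) ((htail.2 l j).mul_left _)
      have := Ee_lower_gain ha r h2' hij
      omega
    · have hbeq : β i = β l := le_antisymm h2' (le_of_not_gt h1)
      have hfac : (p:ℤ_[p]) ^ r ∣ ((g - S) - 1) i l := by
        rcases eq_or_ne i l with rfl | hil
        · have hS0 : S i i = 0 := by
            rw [hSdef, su, Matrix.of_apply, if_neg (lt_irrefl _)]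
          have := hcg i i (le_refl _)
          rw [if_pos rfl] at this
          simpa [Matrix.sub_apply, hS0, Matrix.one_apply_eq] using this
        · have hS0 : S i l = 0 := by rw [hSdef, su, Matrix.of_apply, if_neg h1]
          have := hcg i l (le_of_eq hbeq)
          rw [if_neg hil] at this
          simpa [Matrix.sub_apply, hS0, Matrix.one_apply_ne hil] using this
      have hEe : Ee β a r l j = Ee β a r i j := Ee_eq_of_beta_eq r j hbeq.symm
      refine dvd_trans (pow_dvd_pow (p:ℤ_[p])
        (show Ee β a r i j + (t+1) ≤ r + (Ee β a r l j + t) by omega)) ?_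
      rw [pow_add]
      exact mul_dvd_mul hfac (htail.2 l j)

/-- the iteration: `(g_t, w_t)` with `g_{t+1} = g_t ν_t⁻¹`, `w_{t+1} = ν_t w_t`. -/
noncomputable def iterPair (β : Fin n → Fin k) (g : Matrix (Fin n) (Fin n) ℤ_[p]) :
    ℕ → Matrix (Fin n) (Fin n) ℤ_[p] × Matrix (Fin n) (Fin n) ℤ_[p]
  | 0 => (g, 1)
  | t+1 => ((iterPair β g t).1 * nuInv β (iterPair β g t).1,
      (1 + su β (iterPair β g t).1) * (iterPair β g t).2)

lemma iter_invariant (hβ : Monotone β) (ha : StrictAnti a) (hn : 1 ≤ n) {r : ℕ} (hr : 1 ≤ r)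
    {g : Matrix (Fin n) (Fin n) ℤ_[p]}
    (hu : IsUnit g) (hdv : Dv β a r g) (hcg : Cg β r g) : ∀ t : ℕ,
    (IsUnit (iterPair β g t).1 ∧ Dv β a r (iterPair β g t).1 ∧ Cg β r (iterPair β g t).1
        ∧ (∀ i j, β i < β j → (p:ℤ_[p]) ^ (Ee β a r i j + t) ∣ (iterPair β g t).1 i j))
      ∧ (Up β (iterPair β g t).2 ∧ Dv β a r (iterPair β g t).2)
      ∧ (iterPair β g t).1 * (iterPair β g t).2 = g := by
  intro t
  induction t with
  | zero =>
    refine ⟨⟨hu, hdv, hcg, fun i j _ => by rw [add_zero]; exact hdv i j⟩,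
      ⟨⟨fun i => Matrix.one_apply_eq i, fun i j hne _ => Matrix.one_apply_ne hne⟩, Dv_one r⟩,
      mul_one g⟩
  | succ t ih =>
    obtain ⟨⟨hu1, hdv1, hcg1, hgr1⟩, hw, hprod⟩ := ih
    have hstep := step_main hβ ha hn hr hu1 hdv1 hcg1 hgr1
    have hnu : Up β (1 + su β (iterPair β g t).1) ∧ Dv β a r (1 + su β (iterPair β g t).1) :=
      one_add_SUc_Up (SUc_mono (Nat.zero_le t) (su_SUc hgr1))
    refine ⟨hstep, NrP_mul hnu hw, ?_⟩
    show (iterPair β g t).1 * nuInv β (iterPair β g t).1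
      * ((1 + su β (iterPair β g t).1) * (iterPair β g t).2) = g
    have hni := (nu_mul_nuInv hβ (a := a) hgr1).2
    calc (iterPair β g t).1 * nuInv β (iterPair β g t).1
        * ((1 + su β (iterPair β g t).1) * (iterPair β g t).2)
        = (iterPair β g t).1 * (nuInv β (iterPair β g t).1
          * (1 + su β (iterPair β g t).1)) * (iterPair β g t).2 := by noncomm_ring
      _ = (iterPair β g t).1 * (iterPair β g t).2 := by rw [hni, mul_one]
      _ = g := hprod

theorem stmt_5' (hn : 1 ≤ n) (hk : 2 ≤ k)
    (hβ : Monotone β) (ha : StrictAnti a)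
    (r : ℕ) (hr : 1 ≤ r) :
    (∀ g ∈ UrSet p β a r, ∃ x ∈ NrSet p β a r, ∃ h ∈ UrSet' p β a r, x = h * g) ∧
    (∀ x ∈ NrSet p β a r, ∀ y ∈ NrSet p β a r,
      ((∃ h ∈ UrSet' p β a r, x = h * y) ↔ (∃ m ∈ NrSet p β a (r + 1), x = m * y))) := by
  constructor
  · intro g hg
    rw [mem_UrSet_iff ha] at hg
    obtain ⟨hu, hdv, hcg⟩ := hg
    set T : ℕ := Finset.univ.sup
      (fun ij : Fin n × Fin n => (a (β ij.1) - a (β ij.2)).toNat) with hT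
    obtain ⟨⟨hu1, hdv1, hcg1, hgr1⟩, hw, hprod⟩ :=
      iter_invariant hβ ha hn hr hu hdv hcg T
    set gT := (iterPair β g T).1
    set w := (iterPair β g T).2
    -- gT satisfies the stronger divisibility
    have hdv' : Dv β a (r+1) gT := by
      intro i j
      by_cases h : β i < β j
      · refine dvd_trans (pow_dvd_pow (p:ℤ_[p]) ?_) (hgr1 i j h)
        exact Ee_succ_ge ha r h T (Finset.le_sup (f := fun ij : Fin n × Fin n =>
          (a (β ij.1) - a (β ij.2)).toNat) (Finset.mem_univ (i, j)))
      · rw [Ee_eq_zero ha _ h, pow_zero]; exact one_dvd _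
    obtain ⟨u, hu'⟩ := hu1
    set h : Matrix (Fin n) (Fin n) ℤ_[p] := ↑u⁻¹ with hhdef
    have hgh : gT * h = 1 := by rw [← hu', hhdef]; exact_mod_cast u.mul_inv
    have hhg : h * gT = 1 := by rw [← hu', hhdef]; exact_mod_cast u.inv_mul
    refine ⟨w, (mem_NrSet_iff ha r w).mpr hw, h, ?_, ?_⟩
    · rw [mem_UrSet'_iff ha]
      exact ⟨⟨⟨h, gT, hhg, hgh⟩, rfl⟩, Dv_inv ha hgh hhg hdv',
        Cg_inv hβ hn hgh hhg hcg1⟩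
    · calc w = (h * gT) * w := by rw [hhg, one_mul]
        _ = h * (gT * w) := by rw [mul_assoc]
        _ = h * g := by rw [hprod]
  · intro x hx y hy
    rw [mem_NrSet_iff ha] at hx hy
    obtain ⟨y', hy', hyy', hy'y⟩ := NrP_inv hβ hy hn
    constructor
    · rintro ⟨h, hh, hxh⟩
      rw [mem_UrSet'_iff ha] at hh
      have hhx : h = x * y' := by
        calc h = h * (y * y') := by rw [hyy', mul_one]
          _ = (h * y) * y' := by rw [mul_assoc]
          _ = x * y' := by rw [← hxh]
      have hNr : Up β h ∧ Dv β a r h := hhx ▸ NrP_mul hx hy'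
      refine ⟨h, (mem_NrSet_iff ha (r+1) h).mpr ⟨hNr.1, hh.2.1⟩, hxh⟩
    · rintro ⟨m, hm, hxm⟩
      rw [mem_NrSet_iff ha] at hm
      obtain ⟨m', hm', hmm', hm'm⟩ := NrP_inv hβ hm hn
      refine ⟨m, ?_, hxm⟩
      rw [mem_UrSet'_iff ha]
      refine ⟨⟨⟨m, m', hmm', hm'm⟩, rfl⟩, hm.2, ?_⟩
      intro i j hij
      rcases eq_or_ne i j with rfl | hne
      · rw [if_pos rfl, hm.1.1 i, sub_self]; exact dvd_zero _
      · rw [if_neg hne, sub_zero]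
        by_cases h : β i < β j
        · exact dvd_trans (pow_dvd_pow _ (by have := le_Ee ha (r+1) h; omega)) (hm.2 i j)
        · rw [hm.1.2 i j hne h]; exact dvd_zero _

end Stmt5Aux

/-- For `r ≥ 1`, the inclusion `N_r ⊆ U_r` induces a bijection
`N_{r+1}\N_r ≃ U_r'\U_r`: every right `U_r'`-coset in `U_r` contains an element of `N_r`,
and for `x, y ∈ N_r` one has `U_r' x = U_r' y` iff `N_{r+1} x = N_{r+1} y`. -/
theorem stmt_5 (hn : 1 ≤ n) (hk : 2 ≤ k)
    (β : Fin n → Fin k) (hβ : Monotone β)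
    (a : Fin k → ℤ) (ha : StrictAnti a)
    (r : ℕ) (hr : 1 ≤ r) :
    (∀ g ∈ UrSet p β a r, ∃ x ∈ NrSet p β a r, ∃ h ∈ UrSet' p β a r, x = h * g) ∧
    (∀ x ∈ NrSet p β a r, ∀ y ∈ NrSet p β a r,
      ((∃ h ∈ UrSet' p β a r, x = h * y) ↔ (∃ m ∈ NrSet p β a (r + 1), x = m * y))) := by
  exact Stmt5Aux.stmt_5' hn hk hβ ha r hr
end

section
/- Let F be a field, n ≥ 1, and let u ∈ GL_{2n}(F) be the block matrix [[I_n, I_n],[0, I_n]]. Then: (a) for h₁, h₂ ∈ GL_n(F), the matrix u⁻¹·diag(h₁,h₂)·u is block lower-triangular with respect to n×n blocks (i.e. its upper-right n×n block is zero) if and only if h₁ = h₂; (b) every M ∈ M_{2n}(F) can be written as M = diag(A,B) + u L u⁻¹ where A, B ∈ M_n(F) and L ∈ M_{2n}(F) is block lower-triangular with respect to n×n blocks. (Part (a) computes the stabiliser of the point u in the partial flag variety for the (n,n)-parabolic under the block-diagonal GL_n × GL_n, and part (b) expresses that the orbit of this point is open.) -/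
open Matrix

lemma u_inv (F : Type*) [Field F] (n : ℕ) :
    (Matrix.fromBlocks (1 : Matrix (Fin n) (Fin n) F) 1 0 1)⁻¹ =
      Matrix.fromBlocks (1 : Matrix (Fin n) (Fin n) F) (-1 : Matrix (Fin n) (Fin n) F) (0 : Matrix (Fin n) (Fin n) F) (1 : Matrix (Fin n) (Fin n) F) := by
  apply inv_eq_right_inv
  rw [Matrix.fromBlocks_multiply]
  simp

/-- Let `u = [[1,1],[0,1]]` (block form) in `GL_{2n}(F)`.
(a) For `h₁, h₂ ∈ GL_n(F)`, the matrix `u⁻¹ ⬝ diag(h₁,h₂) ⬝ u` is block lower-triangular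
(zero upper-right `n×n` block) iff `h₁ = h₂`.
(b) Every `2n × 2n` matrix `M` can be written `M = diag(A,B) + u L u⁻¹` with `L` block
lower-triangular. -/
theorem stmt_10 (F : Type*) [Field F] (n : ℕ) (hn : 1 ≤ n) :
    (∀ h₁ h₂ : Matrix (Fin n) (Fin n) F, IsUnit h₁ → IsUnit h₂ →
      (((Matrix.fromBlocks (1 : Matrix (Fin n) (Fin n) F) 1 0 1)⁻¹ *
          Matrix.fromBlocks h₁ 0 0 h₂ *
          Matrix.fromBlocks (1 : Matrix (Fin n) (Fin n) F) 1 0 1).toBlocks₁₂ = 0 ↔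
        h₁ = h₂)) ∧
    (∀ M : Matrix (Fin n ⊕ Fin n) (Fin n ⊕ Fin n) F,
      ∃ (A B : Matrix (Fin n) (Fin n) F) (L : Matrix (Fin n ⊕ Fin n) (Fin n ⊕ Fin n) F),
        L.toBlocks₁₂ = 0 ∧
        M = Matrix.fromBlocks A 0 0 B +
          Matrix.fromBlocks (1 : Matrix (Fin n) (Fin n) F) 1 0 1 * L *
            (Matrix.fromBlocks (1 : Matrix (Fin n) (Fin n) F) 1 0 1)⁻¹) := by
  constructor
  · intro h₁ h₂ _ _
    have e : ((Matrix.fromBlocks (1 : Matrix (Fin n) (Fin n) F) 1 0 1)⁻¹ *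
          Matrix.fromBlocks h₁ 0 0 h₂ *
          Matrix.fromBlocks (1 : Matrix (Fin n) (Fin n) F) 1 0 1).toBlocks₁₂ = h₁ - h₂ := by
      rw [u_inv, Matrix.fromBlocks_multiply, Matrix.fromBlocks_multiply,
        Matrix.toBlocks_fromBlocks₁₂]
      noncomm_ring
    rw [e, sub_eq_zero]
  · intro M
    refine ⟨M.toBlocks₁₁ - M.toBlocks₂₁, M.toBlocks₂₂ - M.toBlocks₁₂,
      Matrix.fromBlocks 0 0 M.toBlocks₂₁ (M.toBlocks₁₂ + M.toBlocks₂₁), rfl, ?_⟩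
    rw [u_inv, Matrix.fromBlocks_multiply, Matrix.fromBlocks_multiply,
      Matrix.fromBlocks_add]
    conv_lhs => rw [← Matrix.fromBlocks_toBlocks M]
    ext (i|i) (j|j) <;> simp [Matrix.fromBlocks, Matrix.toBlocks₁₁, Matrix.toBlocks₁₂, Matrix.toBlocks₂₁, Matrix.toBlocks₂₂] <;> ring
end

section
/- Let F be a field of characteristic zero and n ≥ 1. Then there exists a pair (u₁, u₂) ∈ GL_n(F) × GL_{n+1}(F) with det u₁ = det u₂ such that: (a) the only g ∈ GL_n(F) for which both u₁⁻¹ g u₁ and u₂⁻¹ · diag(g,1) · u₂ are lower-triangular is g = 1; and (b) for every pair (M₁, M₂) ∈ M_n(F) × M_{n+1}(F) with tr M₁ = tr M₂, there exist X ∈ M_n(F) and lower-triangular matrices L₁ ∈ M_n(F), L₂ ∈ M_{n+1}(F) with tr L₁ = tr L₂, such that M₁ = X + u₁ L₁ u₁⁻¹ and M₂ = diag(X,0) + u₂ L₂ u₂⁻¹. (This expresses that GL_n, embedded via g ↦ (g, diag(g,1)) in GL_n ×_{det} GL_{n+1}, has an open orbit with trivial stabiliser on the full flag variety.) -/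
open Matrix

/-- `diagEmbed g c` is the `(n+1) × (n+1)` matrix `diag(g, c)`, with `g` in the upper-left
`n × n` block, `c` in the lower-right corner, and zeros elsewhere. -/
def diagEmbed {F : Type*} [Field F] {n : ℕ} (g : Matrix (Fin n) (Fin n) F) (c : F) :
    Matrix (Fin (n + 1)) (Fin (n + 1)) F :=
  Matrix.of fun i j =>
    if hi : (i : ℕ) < n then (if hj : (j : ℕ) < n then g ⟨i, hi⟩ ⟨j, hj⟩ else 0)
    else (if (j : ℕ) < n then 0 else c)

namespace Stmt13

lemma sum_one {ι : Type*} [Fintype ι] [DecidableEq ι] {M : Type*} [AddCommMonoid M]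
    (a : ι) (x : M) (f : ι → M) (hf : ∀ k, f k = if k = a then x else 0) :
    ∑ k, f k = x := by
  have h : ∑ k, f k = ∑ k, if k = a then x else 0 := Finset.sum_congr rfl fun k _ => hf k
  rw [h]
  simp

lemma sum_two {ι : Type*} [Fintype ι] [DecidableEq ι] {M : Type*} [AddCommMonoid M]
    (a b : ι) (hab : a ≠ b) (x y : M) (f : ι → M)
    (hf : ∀ k, f k = if k = a then x else if k = b then y else 0) :
    ∑ k, f k = x + y := by
  have h : ∀ k, f k = (if k = a then x else 0) + (if k = b then y else 0) := by
    intro k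
    rw [hf k]
    split_ifs with h1 h2
    · exact absurd (h1.symm.trans h2) hab
    · simp
    · simp
    · simp
  rw [Finset.sum_congr rfl fun k _ => h k, Finset.sum_add_distrib]
  simp

variable {F : Type*} [Field F] {n : ℕ}

/-- flip on `Fin n`: `k ↦ n-1-k`. -/
def fl {n : ℕ} (k : Fin n) : Fin n := ⟨n - 1 - (k : ℕ), by have := k.2; omega⟩

lemma fl_fl (k : Fin n) : fl (fl k) = k := by
  have := k.2; apply Fin.ext; simp only [fl]; omega

lemma fl_lt_fl {k l : Fin n} : fl k < fl l ↔ l < k := by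
  have := k.2; have := l.2; simp only [fl, Fin.lt_def]; omega

lemma fl_inj {k l : Fin n} (h : fl k = fl l) : k = l := by
  rw [← fl_fl k, h, fl_fl]

/-- reversal on `Fin (n+1)` fixing the last element. -/
def rv (n : ℕ) (i : Fin (n + 1)) : Fin (n + 1) :=
  if (i : ℕ) = n then i else ⟨n - 1 - (i : ℕ), by omega⟩

lemma rv_val (i : Fin (n + 1)) : (rv n i : ℕ) = if (i : ℕ) = n then n else n - 1 - (i : ℕ) := by
  unfold rv; split_ifs with h <;> simp [h]

lemma rv_rv (i : Fin (n + 1)) : rv n (rv n i) = i := by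
  apply Fin.ext
  have := i.2
  simp only [rv_val]
  split_ifs <;> omega

lemma rv_last : rv n (Fin.last n) = Fin.last n := by
  apply Fin.ext; simp [rv_val]

lemma rv_castSucc (k : Fin n) : rv n (Fin.castSucc k) = Fin.castSucc (fl k) := by
  have := k.2
  apply Fin.ext
  simp only [rv_val, Fin.coe_castSucc, fl]
  rw [if_neg (by omega)]

lemma eq_rv_comm {i j : Fin (n + 1)} : i = rv n j ↔ j = rv n i :=
  ⟨fun h => by rw [h, rv_rv], fun h => by rw [h, rv_rv]⟩

/-- The matrix `u₂`: column `j` is `e_{n-1-j}` for `j < n`, last column is all ones. -/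
def Umat (F : Type*) [Field F] (n : ℕ) : Matrix (Fin (n + 1)) (Fin (n + 1)) F :=
  Matrix.of fun i j => if j = Fin.last n then 1 else if i = rv n j then 1 else 0

/-- The inverse of `Umat`. -/
def Vmat (F : Type*) [Field F] (n : ℕ) : Matrix (Fin (n + 1)) (Fin (n + 1)) F :=
  Matrix.of fun i j =>
    if j = Fin.last n then (if i = Fin.last n then 1 else -1)
    else if i = rv n j then 1 else 0

lemma Umat_apply_castSucc (i : Fin (n + 1)) (l : Fin n) :
    Umat F n i (Fin.castSucc l) = if i = Fin.castSucc (fl l) then 1 else 0 := by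
  have h : Umat F n i (Fin.castSucc l)
      = (if Fin.castSucc l = Fin.last n then 1
        else if i = rv n (Fin.castSucc l) then (1 : F) else 0) := rfl
  rw [h, if_neg (Fin.castSucc_lt_last l).ne, rv_castSucc]

lemma Umat_apply_last (i : Fin (n + 1)) : Umat F n i (Fin.last n) = 1 := by
  simp [Umat]

lemma Vmat_apply (i k : Fin (n + 1)) :
    Vmat F n i k = if k = Fin.last n then (if i = Fin.last n then 1 else -1)
      else if k = rv n i then 1 else 0 := by
  have hb : Vmat F n i k = (if k = Fin.last n then (if i = Fin.last n then (1 : F) else -1)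
      else if i = rv n k then 1 else 0) := rfl
  by_cases h1 : k = Fin.last n
  · rw [hb, if_pos h1, if_pos h1]
  · by_cases h2 : k = rv n i
    · have h3 : i = rv n k := eq_rv_comm.mpr h2
      rw [hb, if_neg h1, if_neg h1, if_pos h3, if_pos h2]
    · have h3 : ¬ i = rv n k := fun h => h2 (eq_rv_comm.mp h)
      rw [hb, if_neg h1, if_neg h1, if_neg h3, if_neg h2]

lemma Vmul_castSucc (B : Matrix (Fin (n + 1)) (Fin (n + 1)) F) (k : Fin n) (j : Fin (n + 1)) :
    (Vmat F n * B) (Fin.castSucc k) j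
      = B (Fin.castSucc (fl k)) j - B (Fin.last n) j := by
  rw [Matrix.mul_apply]
  rw [sum_two (Fin.last n) (Fin.castSucc (fl k)) (Ne.symm (Fin.castSucc_lt_last _).ne)
      (-(B (Fin.last n) j)) (B (Fin.castSucc (fl k)) j)
      (fun m => Vmat F n (Fin.castSucc k) m * B m j) ?_]
  · exact neg_add_eq_sub _ _
  · intro m
    rw [Vmat_apply]
    by_cases hm : m = Fin.last n
    · simp [hm, (Fin.castSucc_lt_last k).ne]
    · rw [rv_castSucc]
      by_cases hm2 : m = Fin.castSucc (fl k)
      · simp [hm, hm2, (Fin.castSucc_lt_last (fl k)).ne]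
      · simp [hm, hm2, (Fin.castSucc_lt_last (fl k)).ne]

lemma Vmul_last (B : Matrix (Fin (n + 1)) (Fin (n + 1)) F) (j : Fin (n + 1)) :
    (Vmat F n * B) (Fin.last n) j = B (Fin.last n) j := by
  rw [Matrix.mul_apply]
  refine sum_one (Fin.last n) _ (fun m => Vmat F n (Fin.last n) m * B m j) ?_
  intro m
  rw [Vmat_apply]
  by_cases hm : m = Fin.last n
  · simp [hm]
  · simp [hm, rv_last]

lemma mulU_castSucc (B : Matrix (Fin (n + 1)) (Fin (n + 1)) F) (i : Fin (n + 1)) (l : Fin n) :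
    (B * Umat F n) i (Fin.castSucc l) = B i (Fin.castSucc (fl l)) := by
  rw [Matrix.mul_apply]
  refine sum_one (Fin.castSucc (fl l)) _ (fun m => B i m * Umat F n m (Fin.castSucc l)) ?_
  intro m
  rw [Umat_apply_castSucc]
  by_cases hm : m = Fin.castSucc (fl l) <;> simp [hm]

lemma mulU_last (B : Matrix (Fin (n + 1)) (Fin (n + 1)) F) (i : Fin (n + 1)) :
    (B * Umat F n) i (Fin.last n) = ∑ m, B i m := by
  rw [Matrix.mul_apply]
  simp [Umat_apply_last]

lemma VU : Vmat F n * Umat F n = 1 := by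
  ext i j
  refine Fin.lastCases ?_ (fun k => ?_) i
  · rw [Vmul_last]
    refine Fin.lastCases ?_ (fun l => ?_) j
    · simp [Umat_apply_last, Matrix.one_apply]
    · rw [Umat_apply_castSucc]
      simp [Matrix.one_apply, (Fin.castSucc_lt_last (fl l)).ne', (Fin.castSucc_lt_last l).ne']
  · rw [Vmul_castSucc]
    refine Fin.lastCases ?_ (fun l => ?_) j
    · simp [Umat_apply_last, Matrix.one_apply, (Fin.castSucc_lt_last k).ne]
    · rw [Umat_apply_castSucc, Umat_apply_castSucc]
      by_cases hkl : k = l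
      · subst hkl
        simp [Matrix.one_apply, (Fin.castSucc_lt_last (fl k)).ne']
      · have h1 : ¬ Fin.castSucc (fl k) = Fin.castSucc (fl l) := by
          intro h; exact hkl (fl_inj (Fin.castSucc_injective _ h))
        have h2 : ¬ Fin.castSucc k = Fin.castSucc l := by
          intro h; exact hkl (Fin.castSucc_injective _ h)
        simp [Matrix.one_apply, h1, h2, (Fin.castSucc_lt_last (fl l)).ne']

lemma UV : Umat F n * Vmat F n = 1 := mul_eq_one_comm.mp VU

lemma diagEmbed_cc (A : Matrix (Fin n) (Fin n) F) (c : F) (k l : Fin n) :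
    diagEmbed A c (Fin.castSucc k) (Fin.castSucc l) = A k l := by
  simp [diagEmbed]

lemma diagEmbed_cl (A : Matrix (Fin n) (Fin n) F) (c : F) (k : Fin n) :
    diagEmbed A c (Fin.castSucc k) (Fin.last n) = 0 := by
  simp [diagEmbed]

lemma diagEmbed_lc (A : Matrix (Fin n) (Fin n) F) (c : F) (l : Fin n) :
    diagEmbed A c (Fin.last n) (Fin.castSucc l) = 0 := by
  simp [diagEmbed]

lemma diagEmbed_ll (A : Matrix (Fin n) (Fin n) F) (c : F) :
    diagEmbed A c (Fin.last n) (Fin.last n) = c := by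
  simp [diagEmbed]

lemma conj₁ (A : Matrix (Fin n) (Fin n) F) (c : F) (k l : Fin n) :
    (Vmat F n * diagEmbed A c * Umat F n) (Fin.castSucc k) (Fin.castSucc l)
      = A (fl k) (fl l) := by
  rw [mulU_castSucc, Vmul_castSucc, diagEmbed_cc, diagEmbed_lc, sub_zero]

lemma conj₂ (A : Matrix (Fin n) (Fin n) F) (c : F) (k : Fin n) :
    (Vmat F n * diagEmbed A c * Umat F n) (Fin.castSucc k) (Fin.last n)
      = (∑ b, A (fl k) b) - c := by
  rw [mulU_last]
  have h : ∀ m, (Vmat F n * diagEmbed A c) (Fin.castSucc k) m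
      = diagEmbed A c (Fin.castSucc (fl k)) m - diagEmbed A c (Fin.last n) m :=
    fun m => Vmul_castSucc _ k m
  rw [Finset.sum_congr rfl fun m _ => h m, Finset.sum_sub_distrib,
    Fin.sum_univ_castSucc, Fin.sum_univ_castSucc]
  simp [diagEmbed_cc, diagEmbed_cl, diagEmbed_lc, diagEmbed_ll]

lemma trace_diagEmbed (A : Matrix (Fin n) (Fin n) F) (c : F) :
    (diagEmbed A c).trace = A.trace + c := by
  rw [Matrix.trace, Matrix.trace, Fin.sum_univ_castSucc]
  simp [Matrix.diag, diagEmbed_cc, diagEmbed_ll]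

lemma conj_cancel {m : Type*} [Fintype m] [DecidableEq m]
    {A B : Matrix m m F} (h1 : A * B = 1) (h2 : B * A = 1)
    (C : Matrix m m F) : A * (B * C * A) * B = C := by
  rw [← Matrix.mul_assoc, ← Matrix.mul_assoc, h1, Matrix.one_mul, Matrix.mul_assoc, h1,
    Matrix.mul_one]

end Stmt13

open Stmt13 in
/-- For `F` of characteristic zero and `n ≥ 1`, there is a pair
`(u₁, u₂) ∈ GL_n(F) × GL_{n+1}(F)` with `det u₁ = det u₂` such that:
(a) the only `g ∈ GL_n(F)` with both `u₁⁻¹ g u₁` and `u₂⁻¹ diag(g,1) u₂` lower-triangular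
is `g = 1`; and
(b) for every `(M₁, M₂)` with `tr M₁ = tr M₂` there exist `X` and lower-triangular
`L₁, L₂` with `tr L₁ = tr L₂` such that `M₁ = X + u₁ L₁ u₁⁻¹` and
`M₂ = diag(X,0) + u₂ L₂ u₂⁻¹`.  (The stabiliser of the open orbit is trivial.) -/
theorem stmt_13 (F : Type*) [Field F] [CharZero F] (n : ℕ) (hn : 1 ≤ n) :
    ∃ (u₁ : Matrix (Fin n) (Fin n) F) (u₂ : Matrix (Fin (n + 1)) (Fin (n + 1)) F),
      IsUnit u₁ ∧ IsUnit u₂ ∧ u₁.det = u₂.det ∧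
      (∀ g : Matrix (Fin n) (Fin n) F, IsUnit g →
        (∀ i j : Fin n, i < j → (u₁⁻¹ * g * u₁) i j = 0) →
        (∀ i j : Fin (n + 1), i < j → (u₂⁻¹ * diagEmbed g 1 * u₂) i j = 0) →
        g = 1) ∧
      (∀ (M₁ : Matrix (Fin n) (Fin n) F) (M₂ : Matrix (Fin (n + 1)) (Fin (n + 1)) F),
        M₁.trace = M₂.trace →
        ∃ (X L₁ : Matrix (Fin n) (Fin n) F) (L₂ : Matrix (Fin (n + 1)) (Fin (n + 1)) F),
          (∀ i j : Fin n, i < j → L₁ i j = 0) ∧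
          (∀ i j : Fin (n + 1), i < j → L₂ i j = 0) ∧
          L₁.trace = L₂.trace ∧
          M₁ = X + u₁ * L₁ * u₁⁻¹ ∧
          M₂ = diagEmbed X 0 + u₂ * L₂ * u₂⁻¹) := by
  classical
  -- the diagonal matrix u₁ with determinant equal to det (Umat F n)
  have hUdet : IsUnit (Umat F n).det := by
    apply Matrix.isUnit_det_of_left_inverse (B := Vmat F n) VU
  have hUdet0 : (Umat F n).det ≠ 0 := hUdet.ne_zero
  set z : Fin n := ⟨0, hn⟩ with hz
  set d : Fin n → F := fun i => if i = z then (Umat F n).det else 1 with hd_def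
  have hd : ∀ i, d i ≠ 0 := by
    intro i; rw [hd_def]; dsimp only; split_ifs
    · exact hUdet0
    · exact one_ne_zero
  set dinv : Matrix (Fin n) (Fin n) F := Matrix.diagonal (fun i => (d i)⁻¹) with hdinv_def
  have hdd : Matrix.diagonal d * dinv = 1 := by
    rw [hdinv_def, Matrix.diagonal_mul_diagonal]
    have : (fun i => d i * (d i)⁻¹) = fun _ : Fin n => (1 : F) :=
      funext fun i => mul_inv_cancel₀ (hd i)
    rw [this, Matrix.diagonal_one]
  have hdd' : dinv * Matrix.diagonal d = 1 := by
    rw [hdinv_def, Matrix.diagonal_mul_diagonal]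
    have : (fun i => (d i)⁻¹ * d i) = fun _ : Fin n => (1 : F) :=
      funext fun i => inv_mul_cancel₀ (hd i)
    rw [this, Matrix.diagonal_one]
  have hinv₁ : (Matrix.diagonal d)⁻¹ = dinv := Matrix.inv_eq_left_inv hdd'
  have hinv₂ : (Umat F n)⁻¹ = Vmat F n := Matrix.inv_eq_left_inv VU
  refine ⟨Matrix.diagonal d, Umat F n, ⟨⟨Matrix.diagonal d, dinv, hdd, hdd'⟩, rfl⟩,
    ⟨⟨Umat F n, Vmat F n, UV, VU⟩, rfl⟩, ?_, ?_, ?_⟩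
  · -- determinants agree
    rw [Matrix.det_diagonal, hd_def]
    simp
  · -- (a) trivial stabiliser
    intro g _ h₁ h₂
    rw [hinv₁] at h₁
    rw [hinv₂] at h₂
    have hup : ∀ a b : Fin n, a < b → g a b = 0 := by
      intro a b hab
      have h := h₁ a b hab
      rw [hdinv_def, Matrix.mul_diagonal, Matrix.diagonal_mul] at h
      rcases mul_eq_zero.mp h with h' | h'
      · rcases mul_eq_zero.mp h' with h'' | h''
        · exact absurd h'' (inv_ne_zero (hd a))
        · exact h''
      · exact absurd h' (hd b)
    have hlow : ∀ a b : Fin n, b < a → g a b = 0 := by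
      intro a b hab
      have h := h₂ (Fin.castSucc (fl a)) (Fin.castSucc (fl b))
        (by rw [Fin.castSucc_lt_castSucc_iff]; exact fl_lt_fl.mpr hab)
      rw [conj₁, fl_fl, fl_fl] at h
      exact h
    have hdiag : ∀ a : Fin n, g a a = 1 := by
      intro a
      have h := h₂ (Fin.castSucc (fl a)) (Fin.last n) (Fin.castSucc_lt_last _)
      rw [conj₂, fl_fl] at h
      have hs : ∑ b, g a b = g a a := by
        refine Finset.sum_eq_single a (fun b _ hb => ?_) (by simp)
        rcases lt_or_gt_of_ne hb with h' | h'
        · exact hlow a b h'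
        · exact hup a b h'
      rw [hs] at h
      have := sub_eq_zero.mp h
      exact this
    ext a b
    rcases lt_trichotomy a b with h | h | h
    · rw [hup a b h, Matrix.one_apply_ne (ne_of_lt h)]
    · subst h; rw [hdiag a, Matrix.one_apply_eq]
    · rw [hlow a b h, Matrix.one_apply_ne (ne_of_gt h)]
  · -- (b) open orbit
    intro M₁ M₂ htr
    set P : Matrix (Fin (n + 1)) (Fin (n + 1)) F := Vmat F n * M₂ * Umat F n with hP
    set X₀ : Matrix (Fin n) (Fin n) F := Matrix.of fun a b =>
      if (b : ℕ) < (a : ℕ) then P (Fin.castSucc (fl a)) (Fin.castSucc (fl b))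
      else if (a : ℕ) < (b : ℕ) then M₁ a b else 0 with hX₀
    set X : Matrix (Fin n) (Fin n) F :=
      X₀ + Matrix.diagonal (fun a => P (Fin.castSucc (fl a)) (Fin.last n) - ∑ b, X₀ a b)
      with hX
    have hXup : ∀ a b : Fin n, a < b → X a b = M₁ a b := by
      intro a b hab
      rw [hX, Matrix.add_apply, Matrix.diagonal_apply_ne _ (ne_of_lt hab), hX₀]
      have h1 : ¬ (b : ℕ) < (a : ℕ) := by have := Fin.lt_def.mp hab; omega
      have h2 : (a : ℕ) < (b : ℕ) := Fin.lt_def.mp hab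
      simp only [Matrix.of_apply]
      rw [if_neg h1, if_pos h2, add_zero]
    have hXlow : ∀ a b : Fin n, b < a →
        X a b = P (Fin.castSucc (fl a)) (Fin.castSucc (fl b)) := by
      intro a b hab
      rw [hX, Matrix.add_apply, Matrix.diagonal_apply_ne _ (ne_of_gt hab), hX₀]
      have h1 : (b : ℕ) < (a : ℕ) := Fin.lt_def.mp hab
      simp only [Matrix.of_apply]
      rw [if_pos h1, add_zero]
    have hrow : ∀ a : Fin n, ∑ b, X a b = P (Fin.castSucc (fl a)) (Fin.last n) := by
      intro a
      rw [hX]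
      have h1 : ∀ b, (X₀ + Matrix.diagonal
          (fun a => P (Fin.castSucc (fl a)) (Fin.last n) - ∑ b, X₀ a b)) a b
          = X₀ a b + Matrix.diagonal
            (fun a => P (Fin.castSucc (fl a)) (Fin.last n) - ∑ b, X₀ a b) a b :=
        fun b => Matrix.add_apply _ _ _ _
      rw [Finset.sum_congr rfl fun b _ => h1 b, Finset.sum_add_distrib]
      have h2 : ∑ b, Matrix.diagonal
          (fun a => P (Fin.castSucc (fl a)) (Fin.last n) - ∑ b, X₀ a b) a b
          = P (Fin.castSucc (fl a)) (Fin.last n) - ∑ b, X₀ a b := by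
        refine sum_one a _ _ ?_
        intro b
        by_cases hb : b = a
        · subst hb; simp [Matrix.diagonal_apply_eq]
        · rw [Matrix.diagonal_apply_ne _ (Ne.symm hb), if_neg hb]
      rw [h2]
      ring
    refine ⟨X, dinv * (M₁ - X) * Matrix.diagonal d,
      Vmat F n * (M₂ - diagEmbed X 0) * Umat F n, ?_, ?_, ?_, ?_, ?_⟩
    · -- L₁ lower triangular
      intro i j hij
      rw [Matrix.mul_diagonal, hdinv_def, Matrix.diagonal_mul, Matrix.sub_apply,
        hXup i j hij]
      simp
    · -- L₂ lower triangular
      intro i j hij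
      have hL : Vmat F n * (M₂ - diagEmbed X 0) * Umat F n
          = P - Vmat F n * diagEmbed X 0 * Umat F n := by
        rw [hP, Matrix.mul_sub, Matrix.sub_mul]
      rw [hL, Matrix.sub_apply]
      have hilt : (i : ℕ) < n := by
        have h1 := j.2
        have h2 := Fin.lt_def.mp hij
        omega
      obtain ⟨k, rfl⟩ : ∃ k : Fin n, i = Fin.castSucc k := ⟨⟨(i : ℕ), hilt⟩, Fin.ext rfl⟩
      revert hij
      refine Fin.lastCases ?_ (fun l => ?_) j
      · intro _
        rw [conj₂, sub_zero, hrow (fl k), fl_fl, sub_self]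
      · intro hij
        have hkl : k < l := Fin.castSucc_lt_castSucc_iff.mp hij
        rw [conj₁, hXlow (fl k) (fl l) (fl_lt_fl.mpr hkl), fl_fl, fl_fl, sub_self]
    · -- traces agree
      have t₁ : (dinv * (M₁ - X) * Matrix.diagonal d).trace = (M₁ - X).trace := by
        rw [Matrix.trace_mul_cycle, hdd, Matrix.one_mul]
      have t₂ : (Vmat F n * (M₂ - diagEmbed X 0) * Umat F n).trace
          = (M₂ - diagEmbed X 0).trace := by
        rw [Matrix.trace_mul_cycle, UV, Matrix.one_mul]
      rw [t₁, t₂, Matrix.trace_sub, Matrix.trace_sub, trace_diagEmbed, htr]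
      ring
    · -- M₁ equation
      rw [hinv₁, conj_cancel hdd hdd']
      abel
    · -- M₂ equation
      rw [hinv₂, conj_cancel UV VU]
      abel
end

section
/- Let F be a field of characteristic zero. Then there exists u ∈ GL₃(F) such that: (a) the only pair (g, x) with g = [[a,b],[0,1]] (a ∈ F^×, b ∈ F) and x ∈ F^× for which u⁻¹ · diag(g, x) · u is lower-triangular is g = I₂ and x = 1; and (b) every M ∈ M₃(F) can be written M = E(α,β,ξ) + u L u⁻¹, where α, β, ξ ∈ F, E(α,β,ξ) is the 3×3 matrix with upper-left 2×2 block [[α,β],[0,0]], lower-right entry ξ and zeros elsewhere, and L ∈ M₃(F) is lower-triangular. (This expresses that the mirabolic-times-torus subgroup of GL₂ × GL₁, embedded in GL₃ via (g,x) ↦ diag(g,x), has an open orbit with trivial stabiliser on the flag variety of GL₃.) -/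
open Matrix

private lemma stmt_14_b (F : Type*) [Field F] (m00 m01 m02 m10 m11 m12 m20 m21 m22 : F) :
    (!![m00,m01,m02;m10,m11,m12;m20,m21,m22] : Matrix (Fin 3) (Fin 3) F) =
      !![m00 - m02 - 3*m10 - m11 + m12 + 2*m20 + m21,
         m01 + 2*m02 + 2*m10 - 2*m12 - 2*m20 - m21, 0; 0, 0, 0;
         0, 0, -m10 - m11 - m12 + m20 + m21 + m22] +
      (!![0,0,1;0,1,1;1,2,1] : Matrix (Fin 3) (Fin 3) F) *
        !![m02 + m10 + m11 - m12 - m20 - m21, 0, 0;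
           -m02 + m12, 2*m10 + m11 - 2*m20 - m21, 0;
           m02, -2*m10 + 2*m12 + 2*m20 + m21, m10 + m11 + m12] *
        !![1,-2,1;-1,1,0;1,0,0] := by
  ext i j
  fin_cases i <;> fin_cases j <;>
    simp [Matrix.mul_apply, Fin.sum_univ_succ, Matrix.vecHead, Matrix.vecTail] <;> ring

/-- For `F` of characteristic zero there exists `u ∈ GL₃(F)` such that:
(a) the only pair `(g, x)` with `g = [[a,b],[0,1]]` (`a ∈ F^×`) in the mirabolic of `GL₂`
and `x ∈ F^×` for which `u⁻¹ ⬝ diag(g, x) ⬝ u` is lower-triangular is `g = 1`, `x = 1`; and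
(b) every `M ∈ M₃(F)` can be written `M = E(α,β,ξ) + u L u⁻¹` with `L` lower-triangular,
where `E(α,β,ξ)` has upper-left `2×2` block `[[α,β],[0,0]]`, lower-right entry `ξ`, and
zeros elsewhere. -/
theorem stmt_14 (F : Type*) [Field F] [CharZero F] :
    ∃ u : Matrix (Fin 3) (Fin 3) F, IsUnit u ∧
      (∀ a b x : F, a ≠ 0 → x ≠ 0 →
        (∀ i j : Fin 3, i < j → (u⁻¹ * !![a, b, 0; 0, 1, 0; 0, 0, x] * u) i j = 0) →
        a = 1 ∧ b = 0 ∧ x = 1) ∧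
      (∀ M : Matrix (Fin 3) (Fin 3) F,
        ∃ (α β ξ : F) (L : Matrix (Fin 3) (Fin 3) F),
          (∀ i j : Fin 3, i < j → L i j = 0) ∧
          M = !![α, β, 0; 0, 0, 0; 0, 0, ξ] + u * L * u⁻¹) := by
  have huv : (!![0,0,1;0,1,1;1,2,1] : Matrix (Fin 3) (Fin 3) F) * !![1,-2,1;-1,1,0;1,0,0] = 1 := by
    ext i j
    fin_cases i <;> fin_cases j <;>
      simp [Matrix.mul_apply, Fin.sum_univ_succ, Matrix.one_apply] <;> norm_num
  have hinv : (!![0,0,1;0,1,1;1,2,1] : Matrix (Fin 3) (Fin 3) F)⁻¹ = !![1,-2,1;-1,1,0;1,0,0] :=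
    inv_eq_right_inv huv
  refine ⟨!![0,0,1;0,1,1;1,2,1],
    ⟨⟨_, _, huv, mul_eq_one_comm.mp huv⟩, rfl⟩, ?_, ?_⟩
  · intro a b x ha hx h
    have h01 := h 0 1 (by decide)
    have h02 := h 0 2 (by decide)
    have h12 := h 1 2 (by decide)
    rw [hinv] at h01 h02 h12
    simp [Matrix.mul_apply, Fin.sum_univ_succ] at h01 h02 h12
    refine ⟨?_, ?_, ?_⟩
    · linear_combination -h01 + 2*h02 + h12
    · linear_combination h01 - 2*h02 - 2*h12
    · linear_combination h02 + h12
  · intro M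
    have hM : M = !![M 0 0, M 0 1, M 0 2; M 1 0, M 1 1, M 1 2; M 2 0, M 2 1, M 2 2] := by
      ext i j; fin_cases i <;> fin_cases j <;> rfl
    refine ⟨M 0 0 - M 0 2 - 3*M 1 0 - M 1 1 + M 1 2 + 2*M 2 0 + M 2 1,
      M 0 1 + 2*M 0 2 + 2*M 1 0 - 2*M 1 2 - 2*M 2 0 - M 2 1,
      -M 1 0 - M 1 1 - M 1 2 + M 2 0 + M 2 1 + M 2 2,
      !![M 0 2 + M 1 0 + M 1 1 - M 1 2 - M 2 0 - M 2 1, 0, 0;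
         -M 0 2 + M 1 2, 2*M 1 0 + M 1 1 - 2*M 2 0 - M 2 1, 0;
         M 0 2, -2*M 1 0 + 2*M 1 2 + 2*M 2 0 + M 2 1, M 1 0 + M 1 1 + M 1 2], ?_, ?_⟩
    · intro i j hij
      fin_cases i <;> fin_cases j <;> simp at hij ⊢
    · rw [hinv]
      conv_lhs => rw [hM]
      exact stmt_14_b F _ _ _ _ _ _ _ _ _
end
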